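/- arXiv:1004.4293 — 5 statements merged into one kernel-verified Lean document; each statement's English description precedes it below -/
import Mathlib

section
/- With a_q(n) the number of q-admissible black/white colorings of a cycle of length n, for n ≥ q+1 we have a_q(n) = a_q(n-1) + a_q(n-q) + q if n ≡ 1 (mod q), and a_q(n) = a_q(n-1) + a_q(n-q) otherwise. -/
/-- A coloring `c` of the cycle `ZMod n` (`true` = black) is `q`-admissible if
at least one bead is black and between any two cyclically consecutive black
beads the number of white beads is divisible by `q`.  The gap `d` from a black
bead to the next black bead has `d - 1` white beads strictly between. -/
def Admissible (q n : ℕ) (c : ZMod n → Bool) : Prop :=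
  (∃ i, c i = true) ∧
  ∀ i : ZMod n, c i = true → ∀ d : ℕ, 0 < d → c (i + (d : ZMod n)) = true →
    (∀ e : ℕ, 0 < e → e < d → c (i + (e : ZMod n)) = false) → q ∣ (d - 1)

namespace Adm

/-- successive differences -/
def diffs : List ℕ → List ℕ
  | [] => []
  | [_] => []
  | a :: b :: t => (b - a) :: diffs (b :: t)

@[simp] lemma diffs_nil : diffs [] = [] := rfl
@[simp] lemma diffs_single (a : ℕ) : diffs [a] = [] := rfl
@[simp] lemma diffs_cons_cons (a b : ℕ) (t : List ℕ) :
    diffs (a :: b :: t) = (b - a) :: diffs (b :: t) := rfl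

lemma diffs_length : ∀ (B : List ℕ), (diffs B).length = B.length - 1
  | [] => rfl
  | [_] => rfl
  | a :: b :: t => by simp [diffs_length (b :: t)]

lemma sorted_eq_of_mem_iff : ∀ {l₁ l₂ : List ℕ}, l₁.Pairwise (· < ·) → l₂.Pairwise (· < ·) →
    (∀ x, x ∈ l₁ ↔ x ∈ l₂) → l₁ = l₂ := by
  intro l₁ l₂ h₁ h₂ h
  refine List.Perm.eq_of_pairwise (fun a b _ _ h1 h2 => absurd (h1.trans h2) (lt_irrefl a)) h₁ h₂ ?_
  exact (List.subperm_of_subset h₁.nodup (fun x hx => (h x).1 hx)).antisymm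
    (List.subperm_of_subset h₂.nodup (fun x hx => (h x).2 hx))

end Adm
namespace Adm

lemma headD_add_take_diffs_sum : ∀ (B : List ℕ), B.Pairwise (· < ·) → ∀ j, j < B.length →
    B.headD 0 + ((diffs B).take j).sum = B.getD j 0
  | [], _, j, hj => by simp at hj
  | [a], _, j, hj => by
      have hj0 : j = 0 := by simpa using hj
      subst hj0; simp
  | a :: b :: t, hs, 0, hj => by simp
  | a :: b :: t, hs, (j+1), hj => by
      have hab : a ≤ b := le_of_lt (List.rel_of_pairwise_cons hs (by simp : b ∈ b :: t))
      have IH := headD_add_take_diffs_sum (b :: t) hs.of_cons j (by simpa using hj)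
      simp only [diffs_cons_cons, List.take_succ_cons, List.sum_cons, List.getD_cons_succ]
      simp only [List.headD_cons] at IH ⊢
      omega

lemma getD_length_sub_one : ∀ (B : List ℕ), B ≠ [] → B.getD (B.length - 1) 0 = B.getLastD 0
  | [], h => absurd rfl h
  | [a], _ => rfl
  | a :: b :: t, _ => by
      have IH := getD_length_sub_one (b :: t) (by simp)
      simp only [List.length_cons] at IH ⊢
      simpa using IH

lemma headD_add_diffs_sum (B : List ℕ) (hs : B.Pairwise (· < ·)) (hB : B ≠ []) :
    B.headD 0 + (diffs B).sum = B.getLastD 0 := by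
  have h1 := headD_add_take_diffs_sum B hs (B.length - 1)
    (by cases B with | nil => simp at hB | cons a t => simp)
  rw [← getD_length_sub_one B hB]
  rw [← h1]
  congr 1
  rw [List.take_of_length_le (by rw [diffs_length])]

def gaps (n : ℕ) (B : List ℕ) : List ℕ := diffs B ++ [n - B.getLastD 0 + B.headD 0]

lemma gaps_length (n : ℕ) (B : List ℕ) (hB : B ≠ []) : (gaps n B).length = B.length := by
  have := diffs_length B
  have : B.length ≠ 0 := by simpa using (List.length_pos_iff.mpr hB).ne'
  simp [gaps, diffs_length]
  omega

lemma gaps_sum (n : ℕ) (B : List ℕ) (hs : B.Pairwise (· < ·)) (hB : B ≠ [])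
    (hlast : B.getLastD 0 < n) : (gaps n B).sum = n := by
  have h1 := headD_add_diffs_sum B hs hB
  simp [gaps] at h1 hlast ⊢
  omega

end Adm
namespace Adm

lemma diffs_getD : ∀ (B : List ℕ) (i : ℕ), i + 1 < B.length →
    (diffs B).getD i 0 = B.getD (i+1) 0 - B.getD i 0
  | [], i, hi => by simp at hi
  | [a], i, hi => by simp at hi
  | a :: b :: t, 0, hi => by simp
  | a :: b :: t, (i+1), hi => by
      have IH := diffs_getD (b :: t) i (by simpa using hi)
      simpa using IH

lemma mem_diffs_iff {B : List ℕ} {g : ℕ} : g ∈ diffs B ↔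
    ∃ i, i + 1 < B.length ∧ g = B.getD (i+1) 0 - B.getD i 0 := by
  rw [List.mem_iff_getElem]
  constructor
  · rintro ⟨i, hi, rfl⟩
    have hi' : i + 1 < B.length := by rw [diffs_length] at hi; omega
    exact ⟨i, hi', by rw [← diffs_getD B i hi', List.getD_eq_getElem _ _ hi]⟩
  · rintro ⟨i, hi, rfl⟩
    have hi' : i < (diffs B).length := by rw [diffs_length]; omega
    exact ⟨i, hi', by rw [← diffs_getD B i hi, List.getD_eq_getElem _ _ hi']⟩

lemma getD_getD_mono {B : List ℕ} (hs : B.Pairwise (· < ·)) {i j : ℕ} (hij : i ≤ j)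
    (hj : j < B.length) : B.getD i 0 ≤ B.getD j 0 := by
  rcases Nat.eq_or_lt_of_le hij with rfl | hij'
  · exact le_refl _
  · have := (List.pairwise_iff_getElem.mp hs) i j (by omega) hj hij'
    rw [List.getD_eq_getElem _ _ (by omega), List.getD_eq_getElem _ _ hj]
    exact le_of_lt this

lemma getD_getD_strictMono {B : List ℕ} (hs : B.Pairwise (· < ·)) {i j : ℕ} (hij : i < j)
    (hj : j < B.length) : B.getD i 0 < B.getD j 0 := by
  have := (List.pairwise_iff_getElem.mp hs) i j (by omega) hj hij
  rw [List.getD_eq_getElem _ _ (by omega), List.getD_eq_getElem _ _ hj]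
  exact this

lemma getD_zero_eq_headD : ∀ (B : List ℕ), B.getD 0 0 = B.headD 0
  | [] => rfl
  | a :: t => rfl

lemma mem_getD {B : List ℕ} {m : ℕ} (hm : m ∈ B) : ∃ t, t < B.length ∧ m = B.getD t 0 := by
  rw [List.mem_iff_getElem] at hm
  obtain ⟨t, ht, rfl⟩ := hm
  exact ⟨t, ht, (List.getD_eq_getElem _ _ ht).symm⟩

lemma headD_le_mem {B : List ℕ} (hs : B.Pairwise (· < ·)) {m : ℕ} (hm : m ∈ B) :
    B.headD 0 ≤ m := by
  obtain ⟨t, ht, rfl⟩ := mem_getD hm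
  rw [← getD_zero_eq_headD]
  exact getD_getD_mono hs (Nat.zero_le t) ht

lemma mem_le_getLastD {B : List ℕ} (hs : B.Pairwise (· < ·)) {m : ℕ} (hm : m ∈ B) :
    m ≤ B.getLastD 0 := by
  obtain ⟨t, ht, rfl⟩ := mem_getD hm
  rw [← getD_length_sub_one B (by rintro rfl; simp at ht)]
  exact getD_getD_mono hs (by omega) (by omega)

end Adm
namespace Adm

def blackList (n : ℕ) (c : ZMod n → Bool) : List ℕ :=
  (List.range n).filter (fun j => c (j : ZMod n))

lemma mem_blackList {n : ℕ} {c : ZMod n → Bool} {m : ℕ} :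
    m ∈ blackList n c ↔ m < n ∧ c (m : ZMod n) = true := by
  simp [blackList, List.mem_filter, List.mem_range]

lemma blackList_sorted (n : ℕ) (c : ZMod n → Bool) : (blackList n c).Pairwise (· < ·) :=
  (List.pairwise_lt_range (n := n)).filter _

lemma blackList_lt {n : ℕ} {c : ZMod n → Bool} {m : ℕ} (hm : m ∈ blackList n c) : m < n :=
  (mem_blackList.mp hm).1

lemma black_iff {n : ℕ} [NeZero n] (c : ZMod n → Bool) (x : ZMod n) :
    c x = true ↔ x.val ∈ blackList n c := by
  rw [mem_blackList]
  have h1 : ((x.val : ℕ) : ZMod n) = x := ZMod.natCast_rightInverse x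
  rw [h1]
  exact ⟨fun h => ⟨ZMod.val_lt x, h⟩, fun h => h.2⟩

lemma blackList_ne_nil {n : ℕ} [NeZero n] {c : ZMod n → Bool} (h : ∃ i, c i = true) :
    blackList n c ≠ [] := by
  obtain ⟨i, hi⟩ := h
  rw [black_iff] at hi
  exact List.ne_nil_of_mem hi

end Adm
namespace Adm

lemma getD_mem {B : List ℕ} {i : ℕ} (hi : i < B.length) : B.getD i 0 ∈ B := by
  rw [List.getD_eq_getElem _ _ hi]; exact List.getElem_mem hi

lemma headD_mem {B : List ℕ} (hB : B ≠ []) : B.headD 0 ∈ B := by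
  rw [← getD_zero_eq_headD]; exact getD_mem (List.length_pos_iff.mpr hB)

lemma getLastD_mem {B : List ℕ} (hB : B ≠ []) : B.getLastD 0 ∈ B := by
  rw [← getD_length_sub_one B hB]
  exact getD_mem (by have := List.length_pos_iff.mpr hB; omega)

section ZModStuff

variable {n : ℕ} [NeZero n] {c : ZMod n → Bool}

lemma cast_add_nat (m d : ℕ) : (m : ZMod n) + (d : ZMod n) = ((m + d : ℕ) : ZMod n) := by
  push_cast; ring

lemma cast_sub_n {m : ℕ} (h : n ≤ m) : ((m : ℕ) : ZMod n) = ((m - n : ℕ) : ZMod n) := by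
  conv_lhs => rw [show m = (m - n) + n by omega]
  push_cast
  simp

lemma white_of_between {i m : ℕ} (hi : i + 1 < (blackList n c).length)
    (h1 : (blackList n c).getD i 0 < m) (h2 : m < (blackList n c).getD (i+1) 0) :
    c (m : ZMod n) = false := by
  by_contra h
  rw [Bool.not_eq_false] at h
  have hmn : m < n := lt_trans h2 (blackList_lt (getD_mem hi))
  have hmB : m ∈ blackList n c := mem_blackList.mpr ⟨hmn, h⟩
  obtain ⟨t, ht, rfl⟩ := mem_getD hmB
  have hsort := blackList_sorted n c
  rcases le_or_gt t i with h' | h'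
  · exact absurd (getD_getD_mono hsort h' (by omega)) (by omega)
  · exact absurd (getD_getD_mono hsort (show i + 1 ≤ t by omega) ht) (by omega)

lemma white_of_outside {m : ℕ} (hm : m < n)
    (h : m < (blackList n c).headD 0 ∨ (blackList n c).getLastD 0 < m) :
    c (m : ZMod n) = false := by
  by_contra hcon
  rw [Bool.not_eq_false] at hcon
  have hmB : m ∈ blackList n c := mem_blackList.mpr ⟨hm, hcon⟩
  have hsort := blackList_sorted n c
  rcases h with h | h
  · exact absurd (headD_le_mem hsort hmB) (by omega)
  · exact absurd (mem_le_getLastD hsort hmB) (by omega)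

end ZModStuff
end Adm
namespace Adm

lemma admissible_iff (q n : ℕ) [NeZero n] (c : ZMod n → Bool) :
    Admissible q n c ↔
      (blackList n c ≠ [] ∧ ∀ g ∈ gaps n (blackList n c), q ∣ (g - 1)) := by
  constructor
  · rintro ⟨hex, hadm⟩
    have hne := blackList_ne_nil hex
    refine ⟨hne, ?_⟩
    intro g hg
    rw [gaps, List.mem_append, List.mem_singleton] at hg
    rcases hg with hg | rfl
    · obtain ⟨i, hi, rfl⟩ := mem_diffs_iff.mp hg
      have hmono := getD_getD_strictMono (blackList_sorted n c) (by omega : i < i + 1) hi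
      have hblack_i : c (((blackList n c).getD i 0 : ℕ) : ZMod n) = true :=
        (mem_blackList.mp (getD_mem (by omega))).2
      have hblack_i1 : c (((blackList n c).getD (i+1) 0 : ℕ) : ZMod n) = true :=
        (mem_blackList.mp (getD_mem hi)).2
      refine hadm _ hblack_i _ (by omega) ?_ ?_
      · rw [cast_add_nat]
        have heq : (blackList n c).getD i 0 +
            ((blackList n c).getD (i+1) 0 - (blackList n c).getD i 0) =
            (blackList n c).getD (i+1) 0 := by omega
        rw [heq]; exact hblack_i1
      · intro e he hed
        rw [cast_add_nat]
        exact white_of_between hi (by omega) (by omega)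
    · have hlast_mem := getLastD_mem hne
      have hhead_mem := headD_mem hne
      have hlastn : (blackList n c).getLastD 0 < n := blackList_lt hlast_mem
      have hheadn : (blackList n c).headD 0 < n := blackList_lt hhead_mem
      have hblack_last : c (((blackList n c).getLastD 0 : ℕ) : ZMod n) = true :=
        (mem_blackList.mp hlast_mem).2
      have hblack_head : c (((blackList n c).headD 0 : ℕ) : ZMod n) = true :=
        (mem_blackList.mp hhead_mem).2
      refine hadm _ hblack_last _ (by omega) ?_ ?_
      · rw [cast_add_nat]
        have h1 : (blackList n c).getLastD 0 +
            (n - (blackList n c).getLastD 0 + (blackList n c).headD 0) =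
            n + (blackList n c).headD 0 := by omega
        rw [h1, ← cast_add_nat]
        simpa [ZMod.natCast_self] using hblack_head
      · intro e he hed
        rw [cast_add_nat]
        rcases lt_or_ge ((blackList n c).getLastD 0 + e) n with hlt | hge
        · exact white_of_outside hlt (Or.inr (by omega))
        · rw [cast_sub_n hge]
          exact white_of_outside (by omega) (Or.inl (by omega))
  · rintro ⟨hne, hg⟩
    constructor
    · exact ⟨(((blackList n c).headD 0 : ℕ) : ZMod n),
        (mem_blackList.mp (headD_mem hne)).2⟩
    · intro x hx d hd hxd hw
      have hxv : x.val ∈ blackList n c := (black_iff c x).mp hx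
      obtain ⟨j, hj, hm⟩ := mem_getD hxv
      have hxM : x = (((blackList n c).getD j 0 : ℕ) : ZMod n) := by
        rw [← hm]; exact (ZMod.natCast_rightInverse x).symm
      rw [hxM] at hxd hw
      rw [cast_add_nat] at hxd
      have hsort := blackList_sorted n c
      rcases lt_or_ge (j+1) (blackList n c).length with hj1 | hj1
      · -- there is a following black bead
        have hmono := getD_getD_strictMono hsort (by omega : j < j + 1) hj1
        have hblack_j1 : c (((blackList n c).getD (j+1) 0 : ℕ) : ZMod n) = true :=
          (mem_blackList.mp (getD_mem hj1)).2
        have hdeq : d = (blackList n c).getD (j+1) 0 - (blackList n c).getD j 0 := by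
          by_contra hne'
          rcases lt_or_gt_of_ne hne' with hlt | hgt
          · have hwhite := white_of_between (c := c) hj1
              (m := (blackList n c).getD j 0 + d) (by omega) (by omega)
            rw [hwhite] at hxd
            exact Bool.noConfusion hxd
          · have hwd := hw _ (by omega) hgt
            rw [cast_add_nat] at hwd
            have heq : (blackList n c).getD j 0 +
                ((blackList n c).getD (j+1) 0 - (blackList n c).getD j 0) =
                (blackList n c).getD (j+1) 0 := by omega
            rw [heq, hblack_j1] at hwd
            exact Bool.noConfusion hwd
        rw [hdeq]
        apply hg
        rw [gaps, List.mem_append]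
        exact Or.inl (mem_diffs_iff.mpr ⟨j, hj1, rfl⟩)
      · -- last black bead, wrap around
        have hjeq : j = (blackList n c).length - 1 := by omega
        have hMlast : (blackList n c).getD j 0 = (blackList n c).getLastD 0 := by
          rw [hjeq]; exact getD_length_sub_one _ hne
        have hlastn : (blackList n c).getLastD 0 < n := blackList_lt (getLastD_mem hne)
        have hheadn : (blackList n c).headD 0 < n := blackList_lt (headD_mem hne)
        have hblack_head : c (((blackList n c).headD 0 : ℕ) : ZMod n) = true :=
          (mem_blackList.mp (headD_mem hne)).2
        have hd0black : c ((((blackList n c).getD j 0 +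
            (n - (blackList n c).getLastD 0 + (blackList n c).headD 0) : ℕ)) : ZMod n)
            = true := by
          rw [hMlast]
          have h1 : (blackList n c).getLastD 0 +
              (n - (blackList n c).getLastD 0 + (blackList n c).headD 0) =
              n + (blackList n c).headD 0 := by omega
          rw [h1, ← cast_add_nat]
          simpa [ZMod.natCast_self] using hblack_head
        have hdeq : d = n - (blackList n c).getLastD 0 + (blackList n c).headD 0 := by
          by_contra hne'
          rcases lt_or_gt_of_ne hne' with hlt | hgt
          · -- d smaller than the wrap gap: position is white
            rcases lt_or_ge ((blackList n c).getD j 0 + d) n with hpos | hpos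
            · have hwhite := white_of_outside (c := c) hpos
                (Or.inr (by omega))
              rw [hwhite] at hxd
              exact Bool.noConfusion hxd
            · rw [cast_sub_n hpos] at hxd
              have hwhite := white_of_outside (c := c)
                (m := (blackList n c).getD j 0 + d - n) (by omega) (Or.inl (by omega))
              rw [hwhite] at hxd
              exact Bool.noConfusion hxd
          · have hwd := hw _ (by omega) hgt
            rw [cast_add_nat, hd0black] at hwd
            exact Bool.noConfusion hwd
        rw [hdeq]
        apply hg
        rw [gaps, List.mem_append, List.mem_singleton]
        exact Or.inr rfl

end Adm
namespace Adm

lemma sum_take_succ_eq (l : List ℕ) (j : ℕ) (hj : j < l.length) :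
    (l.take (j+1)).sum = (l.take j).sum + l.getD j 0 := by
  rw [List.take_succ, List.sum_append, List.getD_eq_getElem _ _ hj]
  simp [List.getElem?_eq_getElem hj]

lemma sum_take_strict_mono {l : List ℕ} (hpos : ∀ g ∈ l, 0 < g) {j j' : ℕ}
    (h : j < j') (h' : j' ≤ l.length) : (l.take j).sum < (l.take j').sum := by
  induction j' with
  | zero => omega
  | succ m ih =>
    have hm : m < l.length := by omega
    rw [sum_take_succ_eq l m hm]
    have hgm : 0 < l.getD m 0 := hpos _ (getD_mem hm)
    rcases Nat.lt_or_ge j m with hjm | hjm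
    · have := ih hjm (by omega); omega
    · have hjm' : j = m := by omega
      subst hjm'; omega

lemma sum_take_mono (l : List ℕ) {j j' : ℕ} (h : j ≤ j') : (l.take j).sum ≤ (l.take j').sum := by
  have h1 : l.take j = (l.take j').take j := by rw [List.take_take, min_eq_left h]
  have h2 := List.sum_take_add_sum_drop (l.take j') j
  rw [h1]
  omega

end Adm
namespace Adm

def P (q n : ℕ) : Type :=
  {p : ℕ × List ℕ // p.2 ≠ [] ∧ p.2.sum = n ∧ (∀ g ∈ p.2, 0 < g ∧ q ∣ (g - 1)) ∧
    p.1 < p.2.getLastD 0}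

lemma getLastD_append_singleton (l : List ℕ) (a : ℕ) : (l ++ [a]).getLastD 0 = a := by
  rw [List.getLastD_eq_getLast?, List.getLast?_concat]
  rfl

lemma gaps_take {n : ℕ} (B : List ℕ) {j : ℕ} (hj : j ≤ (diffs B).length) :
    (gaps n B).take j = (diffs B).take j := by
  rw [gaps, List.take_append_of_le_length hj]

section Decode

variable (b₀ : ℕ) (l : List ℕ)

/-- the list of black positions determined by start `b₀` and gap list `l` -/
def L : List ℕ := (List.range l.length).map (fun j => b₀ + (l.take j).sum)

@[simp] lemma L_length : (L b₀ l).length = l.length := by simp [L]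

lemma L_getD {j : ℕ} (hj : j < l.length) :
    (L b₀ l).getD j 0 = b₀ + (l.take j).sum := by
  rw [List.getD_eq_getElem _ _ (by simpa using hj)]
  simp [L]

lemma L_ne_nil (hne : l ≠ []) : L b₀ l ≠ [] := by
  intro h
  have h2 := congrArg List.length h
  simp only [L_length, List.length_nil] at h2
  exact hne (List.length_eq_zero_iff.mp h2)

lemma take_sum_last {l : List ℕ} (hne : l ≠ []) :
    (l.take (l.length - 1)).sum + l.getLastD 0 = l.sum := by
  have hlen : 0 < l.length := List.length_pos_iff.mpr hne
  have h1 := sum_take_succ_eq l (l.length - 1) (by omega)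
  rw [show l.length - 1 + 1 = l.length by omega, List.take_length] at h1
  rw [← getD_length_sub_one l hne]
  omega

lemma L_bound {n : ℕ} (hne : l ≠ []) (hsum : l.sum = n) (hlt : b₀ < l.getLastD 0)
    {j : ℕ} (hj : j < l.length) : b₀ + (l.take j).sum < n := by
  have h1 := take_sum_last hne
  have h2 := sum_take_mono l (show j ≤ l.length - 1 by omega)
  omega

lemma L_sorted (hpos : ∀ g ∈ l, 0 < g) : (L b₀ l).Pairwise (· < ·) := by
  rw [List.pairwise_iff_getElem]
  intro i j hi hj hij
  simp only [L, List.getElem_map, List.getElem_range]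
  simp only [L, List.length_map, List.length_range] at hj
  have := sum_take_strict_mono hpos hij (by omega)
  omega

end Decode
end Adm
namespace Adm
section Decode2

variable {n : ℕ} [NeZero n] (b₀ : ℕ) (l : List ℕ)

/-- the coloring decoded from start `b₀` and gap list `l` -/
def dec : ZMod n → Bool := fun x =>
  decide (∃ j ∈ List.range l.length, x = ((b₀ + (l.take j).sum : ℕ) : ZMod n))

lemma dec_eq_true_iff (x : ZMod n) :
    dec b₀ l x = true ↔ ∃ j < l.length, x = ((b₀ + (l.take j).sum : ℕ) : ZMod n) := by
  simp [dec]

lemma mem_L_iff {m : ℕ} : m ∈ L b₀ l ↔ ∃ j < l.length, m = b₀ + (l.take j).sum := by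
  simp only [L, List.mem_map, List.mem_range]
  constructor
  · rintro ⟨j, hj, rfl⟩; exact ⟨j, hj, rfl⟩
  · rintro ⟨j, hj, rfl⟩; exact ⟨j, hj, rfl⟩

lemma blackList_dec (hne : l ≠ []) (hsum : l.sum = n) (hpos : ∀ g ∈ l, 0 < g)
    (hlt : b₀ < l.getLastD 0) : blackList n (dec b₀ l) = L b₀ l := by
  apply sorted_eq_of_mem_iff (blackList_sorted n _) (L_sorted b₀ l hpos)
  intro m
  rw [mem_blackList, dec_eq_true_iff, mem_L_iff]
  constructor
  · rintro ⟨hmn, j, hj, hcast⟩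
    refine ⟨j, hj, ?_⟩
    have hb := L_bound b₀ l hne hsum hlt hj
    have := congrArg ZMod.val hcast
    rwa [ZMod.val_cast_of_lt hmn, ZMod.val_cast_of_lt hb] at this
  · rintro ⟨j, hj, rfl⟩
    exact ⟨L_bound b₀ l hne hsum hlt hj, j, hj, rfl⟩

lemma L_headD (hne : l ≠ []) : (L b₀ l).headD 0 = b₀ := by
  rw [← getD_zero_eq_headD, L_getD b₀ l (List.length_pos_iff.mpr hne)]
  simp

lemma gaps_L (hne : l ≠ []) (hsum : l.sum = n) (hpos : ∀ g ∈ l, 0 < g)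
    (hlt : b₀ < l.getLastD 0) : gaps n (L b₀ l) = l := by
  have hlen : 0 < l.length := List.length_pos_iff.mpr hne
  have hLlen : (gaps n (L b₀ l)).length = l.length := by
    rw [gaps_length n _ (L_ne_nil b₀ l hne), L_length]
  apply List.ext_getElem (by rw [hLlen])
  intro i hi hil
  rw [hLlen] at hi
  rw [← List.getD_eq_getElem _ 0, ← List.getD_eq_getElem _ 0]
  have hdl : (diffs (L b₀ l)).length = l.length - 1 := by rw [diffs_length, L_length]
  rcases Nat.lt_or_ge i (l.length - 1) with hi1 | hi1
  · -- interior gap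
    rw [gaps, List.getD_append _ _ _ _ (by omega)]
    rw [diffs_getD _ i (by rw [L_length]; omega)]
    rw [L_getD b₀ l (by omega), L_getD b₀ l (by omega)]
    rw [sum_take_succ_eq l i (by omega)]
    omega
  · -- last gap
    have hieq : i = l.length - 1 := by omega
    subst hieq
    rw [gaps, List.getD_append_right _ _ _ _ (by omega)]
    have : l.length - 1 - (diffs (L b₀ l)).length = 0 := by omega
    rw [this]
    simp only [List.getD_cons_zero]
    have hlast : (L b₀ l).getLastD 0 = b₀ + (l.take (l.length - 1)).sum := by
      rw [← getD_length_sub_one _ (L_ne_nil b₀ l hne), L_length]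
      exact L_getD b₀ l (by omega)
    rw [hlast, L_headD b₀ l hne]
    have h1 := take_sum_last hne
    rw [getD_length_sub_one l hne]
    omega

lemma dec_admissible (q : ℕ) (hne : l ≠ []) (hsum : l.sum = n) (hpos : ∀ g ∈ l, 0 < g)
    (hdvd : ∀ g ∈ l, q ∣ (g - 1)) (hlt : b₀ < l.getLastD 0) :
    Admissible q n (dec b₀ l) := by
  rw [admissible_iff, blackList_dec b₀ l hne hsum hpos hlt,
    gaps_L b₀ l hne hsum hpos hlt]
  exact ⟨L_ne_nil b₀ l hne, hdvd⟩

end Decode2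
end Adm
namespace Adm
section Encode

variable {q n : ℕ} [NeZero n]

lemma blackList_eq_L (c : ZMod n → Bool) (hne : blackList n c ≠ []) :
    blackList n c = L ((blackList n c).headD 0) (gaps n (blackList n c)) := by
  have hsort := blackList_sorted n c
  have hlen : (gaps n (blackList n c)).length = (blackList n c).length :=
    gaps_length n _ hne
  apply List.ext_getElem (by rw [L_length, hlen])
  intro i hi hi'
  rw [← List.getD_eq_getElem _ 0, ← List.getD_eq_getElem _ 0]
  rw [L_getD _ _ (by rw [hlen]; exact hi)]
  rw [gaps_take _ (by rw [diffs_length]; omega)]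
  exact (headD_add_take_diffs_sum _ hsort i hi).symm

/-- encode an admissible coloring as (first black position, gap list) -/
def encode (q n : ℕ) [NeZero n] (c : {c : ZMod n → Bool // Admissible q n c}) : P q n := by
  refine ⟨((blackList n c.1).headD 0, gaps n (blackList n c.1)), ?_, ?_, ?_, ?_⟩
  · simp [gaps]
  · obtain ⟨hne, _⟩ := (admissible_iff q n c.1).mp c.2
    exact gaps_sum n _ (blackList_sorted n c.1) hne (blackList_lt (getLastD_mem hne))
  · obtain ⟨hne, hdvd⟩ := (admissible_iff q n c.1).mp c.2
    intro g hg
    refine ⟨?_, hdvd g hg⟩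
    rw [gaps, List.mem_append, List.mem_singleton] at hg
    rcases hg with hg | rfl
    · obtain ⟨i, hi, rfl⟩ := mem_diffs_iff.mp hg
      have := getD_getD_strictMono (blackList_sorted n c.1) (show i < i + 1 by omega) hi
      omega
    · have := blackList_lt (getLastD_mem hne)
      omega
  · obtain ⟨hne, _⟩ := (admissible_iff q n c.1).mp c.2
    rw [gaps, getLastD_append_singleton]
    have := blackList_lt (getLastD_mem hne)
    have h2 := headD_le_mem (blackList_sorted n c.1) (getLastD_mem hne)
    omega

lemma encode_bijective : Function.Bijective (encode q n) := by
  constructor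
  · rintro ⟨c₁, h₁⟩ ⟨c₂, h₂⟩ heq
    have hne₁ := ((admissible_iff q n c₁).mp h₁).1
    have hne₂ := ((admissible_iff q n c₂).mp h₂).1
    have h1 : (blackList n c₁).headD 0 = (blackList n c₂).headD 0 :=
      congrArg (fun p : P q n => p.val.1) heq
    have h2 : gaps n (blackList n c₁) = gaps n (blackList n c₂) :=
      congrArg (fun p : P q n => p.val.2) heq
    have hB : blackList n c₁ = blackList n c₂ := by
      rw [blackList_eq_L c₁ hne₁, blackList_eq_L c₂ hne₂, h1, h2]
    apply Subtype.ext
    show c₁ = c₂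
    funext x
    have hiff : (c₁ x = true) ↔ (c₂ x = true) := by
      rw [black_iff, black_iff, hB]
    rcases hx1 : c₁ x <;> rcases hx2 : c₂ x <;> simp_all
  · rintro ⟨⟨b₀, l⟩, hne, hsum, hparts, hlt⟩
    have hpos : ∀ g ∈ l, 0 < g := fun g hg => (hparts g hg).1
    have hdvd : ∀ g ∈ l, q ∣ (g - 1) := fun g hg => (hparts g hg).2
    refine ⟨⟨dec b₀ l, dec_admissible b₀ l q hne hsum hpos hdvd hlt⟩, ?_⟩
    apply Subtype.ext
    show ((blackList n (dec b₀ l)).headD 0, gaps n (blackList n (dec b₀ l))) = (b₀, l)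
    rw [blackList_dec b₀ l hne hsum hpos hlt, L_headD b₀ l hne,
      gaps_L b₀ l hne hsum hpos hlt]

end Encode
end Adm
namespace Adm

lemma card_admissible (q n : ℕ) [NeZero n] :
    Nat.card {c : ZMod n → Bool // Admissible q n c} = Nat.card (P q n) :=
  Nat.card_eq_of_bijective _ encode_bijective

lemma finite_P (q n : ℕ) [NeZero n] : Finite (P q n) :=
  Finite.of_equiv _ (Equiv.ofBijective _ (encode_bijective (q := q) (n := n)))

lemma card_split {α : Type*} [Finite α] (p : α → Prop) [DecidablePred p] :
    Nat.card α = Nat.card {a // p a} + Nat.card {a // ¬ p a} := by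
  rw [← Nat.card_sum, Nat.card_congr (Equiv.sumCompl p)]

lemma len_one_eq {q n : ℕ} (p : P q n) (h : p.val.2.length = 1) : p.val.2 = [n] := by
  obtain ⟨a, ha⟩ := List.length_eq_one_iff.mp h
  have hsum := p.2.2.1
  rw [ha] at hsum ⊢
  simp at hsum
  rw [hsum]

lemma card_len_one (q n : ℕ) (hn : 0 < n) :
    Nat.card {p : P q n // p.val.2.length = 1} = if q ∣ (n - 1) then n else 0 := by
  split_ifs with hdvd
  · have e : {p : P q n // p.val.2.length = 1} ≃ Fin n := by
      refine ⟨fun p => ⟨p.val.val.1, ?_⟩, fun b => ⟨⟨(b.val, [n]), ?_, ?_, ?_, ?_⟩, rfl⟩,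
        ?_, ?_⟩
      · have h2 := p.val.2.2.2.2
        rw [len_one_eq p.val p.2] at h2
        simpa using h2
      · simp
      · simp
      · intro g hg
        simp only [List.mem_singleton] at hg
        subst hg
        exact ⟨hn, hdvd⟩
      · simpa using b.2
      · rintro ⟨⟨⟨b₀, l⟩, hp⟩, hlen⟩
        have := len_one_eq _ hlen
        simp only at this
        subst this
        rfl
      · rintro ⟨b, hb⟩
        rfl
    rw [Nat.card_congr e, Nat.card_eq_fintype_card, Fintype.card_fin]
  · have : IsEmpty {p : P q n // p.val.2.length = 1} := by
      refine ⟨fun p => ?_⟩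
      have h2 := p.val.2.2.2.1 n (by rw [len_one_eq p.val p.2]; simp)
      exact hdvd h2.2
    simp [Nat.card_of_isEmpty]

end Adm
namespace Adm

lemma cons_headD_tail {l : List ℕ} (h : l ≠ []) : l.headD 0 :: l.tail = l := by
  cases l with
  | nil => exact absurd rfl h
  | cons a t => rfl

lemma getLastD_cons_ne_nil {t : List ℕ} (a : ℕ) (h : t ≠ []) :
    (a :: t).getLastD 0 = t.getLastD 0 := by
  cases t with
  | nil => exact absurd rfl h
  | cons b u => rfl

lemma length_ge_two {q n : ℕ} (p : P q n) (h : p.val.2.length ≠ 1) :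
    2 ≤ p.val.2.length := by
  have := p.2.1
  have : p.val.2.length ≠ 0 := by simpa using this
  omega

/-- removing a first gap equal to 1 -/
def equivHeadOne (q n : ℕ) (hn : 1 ≤ n) :
    {p : P q n // p.val.2.length ≠ 1 ∧ p.val.2.headD 0 = 1} ≃ P q (n-1) where
  toFun p := by
    refine ⟨(p.val.val.1, p.val.val.2.tail), ?_, ?_, ?_, ?_⟩
    · have := length_ge_two p.val p.2.1
      dsimp only
      intro h
      have hl := congrArg List.length h
      simp only [List.length_tail, List.length_nil] at hl
      omega
    · have hsum := p.val.2.2.1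
      have hc := cons_headD_tail p.val.2.1
      rw [← hc, p.2.2] at hsum
      simp only [List.sum_cons] at hsum
      dsimp only
      omega
    · intro g hg
      exact p.val.2.2.2.1 g (List.mem_of_mem_tail hg)
    · have h2 := p.val.2.2.2.2
      have htne : p.val.val.2.tail ≠ [] := by
        have := length_ge_two p.val p.2.1
        intro h
        rw [← List.length_eq_zero_iff] at h
        simp only [List.length_tail] at h
        omega
      rwa [← cons_headD_tail p.val.2.1, getLastD_cons_ne_nil _ htne] at h2
  invFun p := by
    refine ⟨⟨(p.val.1, 1 :: p.val.2), ?_, ?_, ?_, ?_⟩, ?_, ?_⟩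
    · simp
    · have hsum := p.2.2.1
      simp only [List.sum_cons]
      omega
    · intro g hg
      rcases List.mem_cons.mp hg with rfl | hg
      · exact ⟨Nat.one_pos, by simp⟩
      · exact p.2.2.2.1 g hg
    · rw [getLastD_cons_ne_nil _ p.2.1]
      exact p.2.2.2.2
    · have := List.length_pos_iff.mpr p.2.1
      simp only [List.length_cons]
      omega
    · rfl
  left_inv p := by
    apply Subtype.ext
    apply Subtype.ext
    have hc := cons_headD_tail p.val.2.1
    rw [p.2.2] at hc
    exact Prod.ext rfl hc
  right_inv p := by
    apply Subtype.ext
    rfl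

/-- reducing a first gap `> 1` by `q` -/
def equivHeadBig (q n : ℕ) (hq : 1 ≤ q) (hn : q + 1 ≤ n) :
    {p : P q n // p.val.2.length ≠ 1 ∧ p.val.2.headD 0 ≠ 1} ≃
      {p : P q (n-q) // p.val.2.length ≠ 1} where
  toFun p := by
    have hne := p.val.2.1
    have hlen2 := length_ge_two p.val p.2.1
    have htne : p.val.val.2.tail ≠ [] := by
      intro h; rw [← List.length_eq_zero_iff] at h
      simp only [List.length_tail] at h; omega
    have hhead := p.val.2.2.2.1 (p.val.val.2.headD 0)
      (by rw [← cons_headD_tail hne]; exact List.mem_cons_self)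
    have hbig : q + 1 ≤ p.val.val.2.headD 0 := by
      have h1 := p.2.2
      rcases hhead with ⟨hpos, hdvd⟩
      have : q ∣ (p.val.val.2.headD 0 - 1) := hdvd
      rcases Nat.eq_zero_or_pos (p.val.val.2.headD 0 - 1) with h0 | h0
      · omega
      · have := Nat.le_of_dvd h0 this; omega
    refine ⟨⟨(p.val.val.1, (p.val.val.2.headD 0 - q) :: p.val.val.2.tail), ?_, ?_, ?_, ?_⟩, ?_⟩
    · simp
    · have hsum := p.val.2.2.1
      conv at hsum => rw [← cons_headD_tail hne]
      simp only [List.sum_cons] at hsum ⊢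
      omega
    · intro g hg
      rcases List.mem_cons.mp hg with rfl | hg
      · refine ⟨by omega, ?_⟩
        have : p.val.val.2.headD 0 - q - 1 = (p.val.val.2.headD 0 - 1) - q := by omega
        rw [this]
        exact Nat.dvd_sub hhead.2 dvd_rfl
      · exact p.val.2.2.2.1 g (List.mem_of_mem_tail hg)
    · rw [getLastD_cons_ne_nil _ htne]
      have h2 := p.val.2.2.2.2
      rwa [← cons_headD_tail hne, getLastD_cons_ne_nil _ htne] at h2
    · simp only [List.length_cons, List.length_tail]
      omega
  invFun p := by
    have hne := p.val.2.1
    have hlen2 := length_ge_two p.val p.2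
    have htne : p.val.val.2.tail ≠ [] := by
      intro h; rw [← List.length_eq_zero_iff] at h
      simp only [List.length_tail] at h; omega
    have hhead := p.val.2.2.2.1 (p.val.val.2.headD 0)
      (by rw [← cons_headD_tail hne]; exact List.mem_cons_self)
    refine ⟨⟨(p.val.val.1, (p.val.val.2.headD 0 + q) :: p.val.val.2.tail), ?_, ?_, ?_, ?_⟩, ?_, ?_⟩
    · simp
    · have hsum := p.val.2.2.1
      conv at hsum => rw [← cons_headD_tail hne]
      simp only [List.sum_cons] at hsum ⊢
      omega
    · intro g hg
      rcases List.mem_cons.mp hg with rfl | hg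
      · refine ⟨by omega, ?_⟩
        have : p.val.val.2.headD 0 + q - 1 = (p.val.val.2.headD 0 - 1) + q := by
          have := hhead.1; omega
        rw [this]
        exact Nat.dvd_add hhead.2 dvd_rfl
      · exact p.val.2.2.2.1 g (List.mem_of_mem_tail hg)
    · rw [getLastD_cons_ne_nil _ htne]
      have h2 := p.val.2.2.2.2
      rwa [← cons_headD_tail hne, getLastD_cons_ne_nil _ htne] at h2
    · simp only [List.length_cons, List.length_tail]
      omega
    · simp only [List.headD_cons]
      omega
  left_inv p := by
    have hne := p.val.2.1
    have hhead := p.val.2.2.2.1 (p.val.val.2.headD 0)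
      (by rw [← cons_headD_tail hne]; exact List.mem_cons_self)
    have hbig : q + 1 ≤ p.val.val.2.headD 0 := by
      have h1 := p.2.2
      rcases hhead with ⟨hpos, hdvd⟩
      rcases Nat.eq_zero_or_pos (p.val.val.2.headD 0 - 1) with h0 | h0
      · omega
      · have := Nat.le_of_dvd h0 hdvd; omega
    apply Subtype.ext; apply Subtype.ext
    refine Prod.ext rfl ?_
    show (p.val.val.2.headD 0 - q + q) :: p.val.val.2.tail = p.val.val.2
    rw [show p.val.val.2.headD 0 - q + q = p.val.val.2.headD 0 by omega]
    exact cons_headD_tail hne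
  right_inv p := by
    have hne := p.val.2.1
    apply Subtype.ext; apply Subtype.ext
    refine Prod.ext rfl ?_
    show (p.val.val.2.headD 0 + q - q) :: p.val.val.2.tail = p.val.val.2
    rw [show p.val.val.2.headD 0 + q - q = p.val.val.2.headD 0 by omega]
    exact cons_headD_tail hne

end Adm
namespace Adm

lemma card_P_recurrence (q n : ℕ) (hq : 1 ≤ q) (hn : q + 1 ≤ n) :
    Nat.card (P q n) = Nat.card (P q (n-1)) + Nat.card (P q (n-q)) +
      (if q ∣ (n-1) then q else 0) := by
  haveI : NeZero n := ⟨by omega⟩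
  haveI : NeZero (n-1) := ⟨by omega⟩
  haveI : NeZero (n-q) := ⟨by omega⟩
  haveI := finite_P q n
  haveI := finite_P q (n-1)
  haveI := finite_P q (n-q)
  classical
  have h1 : Nat.card (P q n) = Nat.card {p : P q n // p.val.2.length = 1}
      + Nat.card {p : P q n // ¬ p.val.2.length = 1} :=
    card_split (fun p : P q n => p.val.2.length = 1)
  have h2 : Nat.card {p : P q n // ¬ p.val.2.length = 1} =
      Nat.card {p : P q n // ¬ p.val.2.length = 1 ∧ p.val.2.headD 0 = 1}
      + Nat.card {p : P q n // ¬ p.val.2.length = 1 ∧ ¬ p.val.2.headD 0 = 1} := by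
    rw [card_split (fun p : {p : P q n // ¬ p.val.2.length = 1} =>
      p.val.val.2.headD 0 = 1)]
    congr 1
    · exact Nat.card_congr (Equiv.subtypeSubtypeEquivSubtypeInter
        (fun p : P q n => ¬ p.val.2.length = 1) (fun p : P q n => p.val.2.headD 0 = 1))
    · exact Nat.card_congr (Equiv.subtypeSubtypeEquivSubtypeInter
        (fun p : P q n => ¬ p.val.2.length = 1) (fun p : P q n => ¬ p.val.2.headD 0 = 1))
  have h3 : Nat.card {p : P q n // ¬ p.val.2.length = 1 ∧ p.val.2.headD 0 = 1}
      = Nat.card (P q (n-1)) := Nat.card_congr (equivHeadOne q n (by omega))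
  have h4 : Nat.card {p : P q n // ¬ p.val.2.length = 1 ∧ ¬ p.val.2.headD 0 = 1}
      = Nat.card {p : P q (n-q) // ¬ p.val.2.length = 1} :=
    Nat.card_congr (equivHeadBig q n hq hn)
  have h5 : Nat.card (P q (n-q)) = Nat.card {p : P q (n-q) // p.val.2.length = 1}
      + Nat.card {p : P q (n-q) // ¬ p.val.2.length = 1} :=
    card_split (fun p : P q (n-q) => p.val.2.length = 1)
  have h6 := card_len_one q n (by omega)
  have h7 := card_len_one q (n-q) (by omega)
  have h8 : q ∣ (n - q - 1) ↔ q ∣ (n-1) := by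
    constructor
    · intro h
      have heq : n - 1 = (n - q - 1) + q := by omega
      rw [heq]
      exact Nat.dvd_add h dvd_rfl
    · intro h
      have heq : n - q - 1 = (n - 1) - q := by omega
      rw [heq]
      exact Nat.dvd_sub h dvd_rfl
  by_cases hdvd : q ∣ (n - 1)
  · rw [if_pos hdvd] at h6 ⊢
    rw [if_pos (h8.mpr hdvd)] at h7
    omega
  · rw [if_neg hdvd] at h6 ⊢
    rw [if_neg (fun h => hdvd (h8.mp h))] at h7
    omega

end Adm

/-- The recurrence for the number of `q`-admissible colorings for `n ≥ q+1`. -/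
theorem stmt2 (q n : ℕ) (hq : 1 ≤ q) (hn : q + 1 ≤ n) :
    Nat.card {c : ZMod n → Bool // Admissible q n c} =
      if n % q = 1 % q then
        Nat.card {c : ZMod (n - 1) → Bool // Admissible q (n - 1) c} +
          Nat.card {c : ZMod (n - q) → Bool // Admissible q (n - q) c} + q
      else
        Nat.card {c : ZMod (n - 1) → Bool // Admissible q (n - 1) c} +
          Nat.card {c : ZMod (n - q) → Bool // Admissible q (n - q) c} := by
  haveI : NeZero n := ⟨by omega⟩
  haveI : NeZero (n-1) := ⟨by omega⟩
  haveI : NeZero (n-q) := ⟨by omega⟩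
  rw [Adm.card_admissible q n, Adm.card_admissible q (n-1), Adm.card_admissible q (n-q),
    Adm.card_P_recurrence q n hq hn]
  have hiff : (n % q = 1 % q) ↔ q ∣ (n - 1) := by
    rw [eq_comm]
    exact Nat.modEq_iff_dvd' (by omega)
  by_cases h : q ∣ (n - 1)
  · rw [if_pos h, if_pos (hiff.mpr h)]
  · rw [if_neg h, if_neg (fun hc => h (hiff.mp hc))]
    omega
end

section
/- Define a(n) by a(0)=0, a(1)=a(2)=1, and a(n) = a(n-1) + a(n-2) + 1 - (-1)^n for n ≥ 3. Then a(n) equals the number of 2-admissible black/white colorings of a cycle of length n (at least one black bead, an even number of white beads between any two cyclically consecutive black beads, rotations/reflections distinct). -/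
/-! ### last0 -/

def last0 : List ℕ → ℕ
  | [] => 0
  | [a] => a
  | _ :: b :: l => last0 (b :: l)

@[simp] lemma last0_nil : last0 [] = 0 := rfl
@[simp] lemma last0_single (a : ℕ) : last0 [a] = a := rfl
lemma last0_cons (a : ℕ) {l : List ℕ} (h : l ≠ []) : last0 (a :: l) = last0 l := by
  cases l with
  | nil => simp at h
  | cons b t => rfl

lemma last0_le_sum : ∀ {l : List ℕ}, last0 l ≤ l.sum := by
  intro l
  induction l with
  | nil => simp
  | cons a t ih =>
    cases t with
    | nil => simp
    | cons b u =>
      rw [last0_cons _ (by simp)]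
      simp only [List.sum_cons] at ih ⊢
      omega

lemma sum_take_add_last0_le {g : List ℕ} : ∀ {t : ℕ}, t < g.length →
    (g.take t).sum + last0 g ≤ g.sum := by
  induction g with
  | nil => intro t h; simp at h
  | cons a l ih =>
    intro t h
    cases t with
    | zero => simpa using last0_le_sum (l := a :: l)
    | succ t' =>
      have hl : l ≠ [] := by
        intro he; subst he; simp at h
      rw [last0_cons _ hl]
      simp only [List.take_succ_cons, List.sum_cons, List.length_cons] at *
      have := ih (t := t') (by omega)
      omega

lemma sum_take_lt_sum_take {g : List ℕ} (hpos : ∀ b ∈ g, 0 < b) :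
    ∀ {t t' : ℕ}, t < t' → t' ≤ g.length → (g.take t).sum < (g.take t').sum := by
  intro t t' h h'
  induction t' with
  | zero => omega
  | succ u ih =>
    have hu : u < g.length := by omega
    have hsucc : (g.take (u+1)).sum = (g.take u).sum + g[u] := List.sum_take_succ _ _ hu
    have hgu : 0 < g[u] := hpos _ (List.getElem_mem hu)
    rcases Nat.lt_or_ge t u with h2 | h2
    · have := ih h2 (le_of_lt hu)
      omega
    · have : t = u := by omega
      subst this
      omega

lemma sum_take_le_sum_take {g : List ℕ} (hpos : ∀ b ∈ g, 0 < b) {t t' : ℕ}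
    (h : t ≤ t') (h' : t' ≤ g.length) : (g.take t).sum ≤ (g.take t').sum := by
  rcases Nat.lt_or_ge t t' with h2 | h2
  · exact le_of_lt (sum_take_lt_sum_take hpos h2 h')
  · have : t = t' := by omega
    subst this; rfl

/-! ### modular helper -/

lemma modeq_eq_of_window {n a b L : ℕ} (h : a ≡ b [MOD n]) (h1 : L ≤ a) (h2 : a < L + n)
    (h3 : L ≤ b) (h4 : b < L + n) : a = b := by
  rcases Nat.le_total a b with hab | hab
  · have := (Nat.modEq_iff_dvd' hab).1 h
    rcases this with ⟨k, hk⟩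
    rcases k with _ | k
    · omega
    · have h5 : n ≤ n * (k+1) := Nat.le_mul_of_pos_right n (by omega)
      omega
  · have := (Nat.modEq_iff_dvd' hab).1 h.symm
    rcases this with ⟨k, hk⟩
    rcases k with _ | k
    · omega
    · have h5 : n ≤ n * (k+1) := Nat.le_mul_of_pos_right n (by omega)
      omega


section NXT

open Classical in
noncomputable def nxt (cp : ℕ → Bool) (i : ℕ) : ℕ :=
  (if h : ∃ d, cp (i + 1 + d) = true then Nat.find h else 0) + 1

lemma nxt_pos (cp : ℕ → Bool) (i : ℕ) : 0 < nxt cp i := Nat.succ_pos _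

variable {cp : ℕ → Bool}

lemma nxt_black {i d : ℕ} (hd : 0 < d) (h : cp (i + d) = true) :
    cp (i + nxt cp i) = true := by
  have hex : ∃ e, cp (i + 1 + e) = true := ⟨d - 1, by rwa [show i+1+(d-1) = i + d by omega]⟩
  rw [nxt, dif_pos hex]
  have := Nat.find_spec hex
  rwa [show i + (Nat.find hex + 1) = i + 1 + Nat.find hex by omega]

lemma nxt_le {i d : ℕ} (hd : 0 < d) (h : cp (i + d) = true) : nxt cp i ≤ d := by
  have hex : ∃ e, cp (i + 1 + e) = true := ⟨d - 1, by rwa [show i+1+(d-1) = i + d by omega]⟩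
  rw [nxt, dif_pos hex]
  have : Nat.find hex ≤ d - 1 :=
    Nat.find_le (by rwa [show i+1+(d-1) = i + d by omega])
  omega

lemma nxt_min {i e : ℕ} (he : 0 < e) (hlt : e < nxt cp i) : cp (i + e) = false := by
  rw [nxt] at hlt
  split at hlt
  · next hex =>
    have := Nat.find_min hex (show e - 1 < Nat.find hex by omega)
    rw [show i + 1 + (e-1) = i + e by omega] at this
    exact Bool.not_eq_true _ ▸ (by simpa using this)
  · omega

end NXT

noncomputable def mkg (cp : ℕ → Bool) : ℕ → ℕ → List ℕ
  | 0, _ => []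
  | (r+1), i => nxt cp i :: mkg cp (r + 1 - nxt cp i) (i + nxt cp i)
  decreasing_by have := nxt_pos cp i; omega

lemma mkg_zero (cp : ℕ → Bool) (i : ℕ) : mkg cp 0 i = [] := by rw [mkg]

lemma mkg_pos (cp : ℕ → Bool) {rem : ℕ} (i : ℕ) (h : 0 < rem) :
    mkg cp rem i = nxt cp i :: mkg cp (rem - nxt cp i) (i + nxt cp i) := by
  rcases rem with _ | r
  · omega
  · rw [mkg]

lemma mkg_ne_nil (cp : ℕ → Bool) {rem : ℕ} (i : ℕ) (h : 0 < rem) :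
    mkg cp rem i ≠ [] := by rw [mkg_pos cp i h]; simp

/-- characterization of blacks in the window `[i, i+rem)` by partial sums of `g`. -/
def Chr (cp : ℕ → Bool) (i rem : ℕ) (g : List ℕ) : Prop :=
  ∀ j, i ≤ j → j < i + rem → (cp j = true ↔ ∃ t, t < g.length ∧ j = i + (g.take t).sum)


lemma mkg_spec {cp : ℕ → Bool} : ∀ rem i, cp i = true → cp (i + rem) = true →
    (mkg cp rem i).sum = rem ∧ Chr cp i rem (mkg cp rem i) ∧
    (0 < rem → cp (i + rem - last0 (mkg cp rem i)) = true ∧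
      0 < last0 (mkg cp rem i) ∧ last0 (mkg cp rem i) ≤ rem) := by
  intro rem
  induction rem using Nat.strong_induction_on with
  | _ rem IH =>
    intro i hi hir
    rcases Nat.eq_zero_or_pos rem with h0 | hpos
    · subst h0
      refine ⟨by simp [mkg_zero], ?_, by omega⟩
      intro j h1 h2; omega
    · have hd1 : 0 < nxt cp i := nxt_pos cp i
      have hdle : nxt cp i ≤ rem := nxt_le hpos hir
      have hblack : cp (i + nxt cp i) = true := nxt_black hpos hir
      have heq : mkg cp rem i = nxt cp i :: mkg cp (rem - nxt cp i) (i + nxt cp i) :=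
        mkg_pos cp i hpos
      obtain ⟨hsum, hchr, hlast⟩ := IH (rem - nxt cp i) (by omega) (i + nxt cp i) hblack
        (by rw [show i + nxt cp i + (rem - nxt cp i) = i + rem by omega]; exact hir)
      rw [heq]
      have hsum' : (nxt cp i :: mkg cp (rem - nxt cp i) (i + nxt cp i)).sum = rem := by
        simp only [List.sum_cons]; omega
      refine ⟨hsum', ?_, ?_⟩
      · intro j hj1 hj2
        rcases Nat.lt_or_ge j (i + nxt cp i) with hj3 | hj3
        · rcases Nat.eq_or_lt_of_le hj1 with hji | hji
          · constructor
            · intro _; exact ⟨0, by simp, by simp [hji]⟩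
            · intro _; rw [← hji]; exact hi
          · have hw : cp j = false := by
              have := nxt_min (show 0 < j - i by omega) (show j - i < nxt cp i by omega)
              rwa [show i + (j - i) = j by omega] at this
            simp only [hw]
            constructor
            · intro h; exact absurd h (by simp)
            · rintro ⟨t, ht, hteq⟩
              rcases t with _ | t'
              · simp at hteq; omega
              · rw [List.take_succ_cons, List.sum_cons] at hteq
                omega
        · have := hchr j hj3 (by omega)
          rw [this]
          constructor
          · rintro ⟨t, ht, hteq⟩
            exact ⟨t + 1, by simpa using Nat.succ_lt_succ ht,
              by rw [List.take_succ_cons, List.sum_cons]; omega⟩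
          · rintro ⟨t, ht, hteq⟩
            rcases t with _ | t'
            · simp at hteq; omega
            · rw [List.take_succ_cons, List.sum_cons] at hteq
              refine ⟨t', by simpa using ht, by omega⟩
      · intro _
        rcases Nat.eq_zero_or_pos (rem - nxt cp i) with hz | hz
        · rw [hz, mkg_zero]
          simp only [last0_single]
          refine ⟨?_, by omega, by omega⟩
          rw [show i + rem - nxt cp i = i by omega]; exact hi
        · have htlne : mkg cp (rem - nxt cp i) (i + nxt cp i) ≠ [] := mkg_ne_nil cp _ hz
          rw [last0_cons _ htlne]
          obtain ⟨hl1, hl2, hl3⟩ := hlast hz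
          refine ⟨?_, by omega, by omega⟩
          rwa [show i + nxt cp i + (rem - nxt cp i) - last0 (mkg cp (rem - nxt cp i) (i + nxt cp i))
            = i + rem - last0 (mkg cp (rem - nxt cp i) (i + nxt cp i)) by omega] at hl1

lemma mkg_odd {cp : ℕ → Bool}
    (Hyp : ∀ i r, cp i = true → cp (i + r) = true → 0 < r → Odd (nxt cp i)) :
    ∀ rem i, cp i = true → cp (i + rem) = true → ∀ b ∈ mkg cp rem i, Odd b := by
  intro rem
  induction rem using Nat.strong_induction_on with
  | _ rem IH =>
    intro i hi hir b hb
    rcases Nat.eq_zero_or_pos rem with h0 | hpos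
    · subst h0; rw [mkg_zero] at hb; simp at hb
    · rw [mkg_pos cp i hpos] at hb
      have hd1 : 0 < nxt cp i := nxt_pos cp i
      have hdle : nxt cp i ≤ rem := nxt_le hpos hir
      have hblack : cp (i + nxt cp i) = true := nxt_black hpos hir
      rcases List.mem_cons.1 hb with hb1 | hb2
      · subst hb1; exact Hyp i rem hi hir hpos
      · exact IH (rem - nxt cp i) (by omega) (i + nxt cp i) hblack
          (by rw [show i + nxt cp i + (rem - nxt cp i) = i + rem by omega]; exact hir) b hb2

lemma mkg_eq_of_chr {cp : ℕ → Bool} : ∀ (g : List ℕ) (i : ℕ), (∀ b ∈ g, 0 < b) →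
    cp i = true → cp (i + g.sum) = true → Chr cp i g.sum g → mkg cp g.sum i = g := by
  intro g
  induction g with
  | nil => intro i _ _ _ _; simpa using mkg_zero cp i
  | cons a tl ih =>
    intro i hpos hi hir hchr
    have ha : 0 < a := hpos a (by simp)
    have hrem : 0 < (a :: tl).sum := by simp only [List.sum_cons]; omega
    have hca : cp (i + a) = true := by
      rcases tl with _ | ⟨b, l'⟩
      · simpa using hir
      · have hbpos : 0 < b := hpos b (by simp)
        have h2 := hchr (i + a) (by omega) (by simp only [List.sum_cons]; omega)
        rw [h2]
        exact ⟨1, by simp, by simp⟩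
    have hle : nxt cp i ≤ a := nxt_le ha hca
    have hge : a ≤ nxt cp i := by
      by_contra hlt
      push_neg at hlt
      have hb : cp (i + nxt cp i) = true := nxt_black hrem hir
      have h2 := hchr (i + nxt cp i) (by omega)
        (by simp only [List.sum_cons]; have := nxt_pos cp i; omega)
      rw [h2] at hb
      obtain ⟨t, ht, hteq⟩ := hb
      rcases t with _ | t'
      · simp at hteq; have := nxt_pos cp i; omega
      · rw [List.take_succ_cons, List.sum_cons] at hteq
        omega
    have hna : nxt cp i = a := le_antisymm hle hge
    rw [mkg_pos cp i hrem, hna]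
    congr 1
    have hsum : (a :: tl).sum - a = tl.sum := by simp only [List.sum_cons]; omega
    rw [hsum]
    apply ih (i + a) (by intro b hb; exact hpos b (by simp [hb])) hca
    · rw [show i + a + tl.sum = i + (a :: tl).sum by simp only [List.sum_cons]; omega]
      exact hir
    · intro j hj1 hj2
      have h2 := hchr j (by omega) (by simp only [List.sum_cons]; omega)
      rw [h2]
      constructor
      · rintro ⟨t, ht, hteq⟩
        rcases t with _ | t'
        · simp at hteq; omega
        · rw [List.take_succ_cons, List.sum_cons] at hteq
          refine ⟨t', by simpa using ht, by omega⟩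
      · rintro ⟨t, ht, hteq⟩
        exact ⟨t + 1, by simpa using Nat.succ_lt_succ ht,
          by rw [List.take_succ_cons, List.sum_cons]; omega⟩

/-! ### the counting structure -/

def GoodP (n : ℕ) (x : List ℕ × ℕ) : Prop :=
  x.1.sum = n ∧ (∀ a ∈ x.1, Odd a) ∧ x.2 < last0 x.1

abbrev XT (n : ℕ) := {x : List ℕ × ℕ // GoodP n x}

noncomputable def tc (n : ℕ) : ℕ := Nat.card (XT n)

lemma GoodP.ne_nil {n : ℕ} {x : List ℕ × ℕ} (h : GoodP n x) (hn : 0 < n) : x.1 ≠ [] := by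
  intro he
  have := h.1
  rw [he] at this
  simp at this
  omega

lemma GoodP.pos {n : ℕ} {x : List ℕ × ℕ} (h : GoodP n x) : ∀ b ∈ x.1, 0 < b := by
  intro b hb
  exact (h.2.1 b hb).pos

lemma GoodP.s_lt {n : ℕ} {x : List ℕ × ℕ} (h : GoodP n x) : x.2 < n := by
  have h1 := h.1
  have h2 := h.2.2
  have h3 : last0 x.1 ≤ x.1.sum := last0_le_sum
  omega

instance XT_finite (n : ℕ) : Finite (XT n) := by
  apply Finite.of_injective (β := Composition n × Fin (n+1))
    (fun (x : XT n) => (⟨x.1.1, fun {i} hi => x.2.pos i hi, x.2.1⟩,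
      ⟨x.1.2, by have := x.2.s_lt; omega⟩))
  intro x y hxy
  simp only [Prod.mk.injEq, Composition.mk.injEq, Fin.mk.injEq] at hxy
  exact Subtype.ext (Prod.ext hxy.1 hxy.2)

lemma headI_cons_tail {l : List ℕ} (h : l ≠ []) : l.headI :: l.tail = l := by
  cases l with
  | nil => simp at h
  | cons a t => rfl

lemma headI_mem {l : List ℕ} (h : l ≠ []) : l.headI ∈ l := by
  cases l with
  | nil => simp at h
  | cons a t => simp

lemma finite_sub (n : ℕ) (p : List ℕ × ℕ → Prop) (h : ∀ x, p x → GoodP n x) :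
    Finite {x : List ℕ × ℕ // p x} := by
  apply Finite.of_injective (β := XT n) (fun x => ⟨x.1, h x.1 x.2⟩)
  intro a b hab
  have := congrArg Subtype.val hab
  exact Subtype.ext this

lemma card_partition (p q : List ℕ × ℕ → Prop) [Finite {x : List ℕ × ℕ // p x}] :
    Nat.card {x : List ℕ × ℕ // p x} =
      Nat.card {x : List ℕ × ℕ // p x ∧ q x} + Nat.card {x : List ℕ × ℕ // p x ∧ ¬ q x} := by
  classical
  rw [← Nat.card_congr (Equiv.subtypeSubtypeEquivSubtypeInter p q),
    ← Nat.card_congr (Equiv.subtypeSubtypeEquivSubtypeInter p (fun x => ¬ q x)),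
    ← Nat.card_sum]
  exact Nat.card_congr (Equiv.sumCompl (fun y : {x // p x} => q y.1)).symm

lemma GoodP.len1_shape {n : ℕ} {x : List ℕ × ℕ} (h : GoodP n x) (hl : x.1.length = 1) :
    x.1 = [n] := by
  obtain ⟨a, ha⟩ := List.length_eq_one_iff.1 hl
  have := h.1
  rw [ha] at this ⊢
  simp only [List.sum_cons, List.sum_nil] at this
  simp [← this]

lemma card_len1 {n : ℕ} :
    Nat.card {x : List ℕ × ℕ // GoodP n x ∧ x.1.length = 1} = if Odd n then n else 0 := by
  split
  · next hodd =>
    have key : Nat.card {x : List ℕ × ℕ // GoodP n x ∧ x.1.length = 1} = Nat.card (Fin n) := by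
      apply Nat.card_congr
      refine ⟨fun x => ⟨x.1.2, ?_⟩, fun s => ⟨([n], s.1), ⟨by simp, by simpa using hodd, by simpa using s.2⟩, by simp⟩, ?_, ?_⟩
      · have hs := x.2.1.2.2
        rw [x.2.1.len1_shape x.2.2] at hs
        simpa using hs
      · intro x
        apply Subtype.ext
        show ((([n] : List ℕ), x.1.2) : List ℕ × ℕ) = x.1
        rw [← x.2.1.len1_shape x.2.2]
      · intro s; rfl
    rw [key]
    simp [Nat.card_eq_fintype_card]
  · next hev =>
    have : IsEmpty {x : List ℕ × ℕ // GoodP n x ∧ x.1.length = 1} := by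
      constructor
      intro x
      have hsh := x.2.1.len1_shape x.2.2
      have := x.2.1.2.1 n (by rw [hsh]; simp)
      exact hev this
    exact Nat.card_of_isEmpty

lemma card_not_len1 {n : ℕ} (hn : 1 ≤ n) :
    Nat.card {x : List ℕ × ℕ // GoodP n x ∧ ¬ x.1.length = 1} =
      Nat.card {x : List ℕ × ℕ // GoodP n x ∧ 2 ≤ x.1.length} := by
  apply Nat.card_congr
  apply Equiv.subtypeEquivRight
  intro x
  constructor
  · rintro ⟨hg, hl⟩
    have := hg.ne_nil (by omega)
    have := List.length_pos_iff.2 this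
    exact ⟨hg, by omega⟩
  · rintro ⟨hg, hl⟩
    exact ⟨hg, by omega⟩

/-- drop a first gap equal to 1 -/
def equivHead1 {n : ℕ} (hn : 2 ≤ n) :
    {x : List ℕ × ℕ // GoodP n x ∧ 2 ≤ x.1.length ∧ x.1.headI = 1} ≃ XT (n-1) where
  toFun x := ⟨(x.1.1.tail, x.1.2), by
    obtain ⟨⟨g, s⟩, ⟨hsum, hodd, hlast⟩, hlen, hhead⟩ := x
    dsimp only at *
    dsimp only at hsum hodd hlast hlen hhead
    have hne : g ≠ [] := by intro h; rw [h] at hlen; simp at hlen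
    have htne : g.tail ≠ [] := by
      intro h
      have := congrArg List.length (headI_cons_tail hne)
      rw [h] at this
      simp at this
      omega
    refine ⟨?_, ?_, ?_⟩ <;> dsimp only
    · have := congrArg List.sum (headI_cons_tail hne)
      simp only [List.sum_cons, hhead] at this
      omega
    · intro a ha
      exact hodd a (List.mem_of_mem_tail ha)
    · rwa [← last0_cons g.headI htne, headI_cons_tail hne]⟩
  invFun y := ⟨(1 :: y.1.1, y.1.2), by
    obtain ⟨⟨g, s⟩, hsum, hodd, hlast⟩ := y
    dsimp only at *
    dsimp only at hsum hodd hlast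
    have hne : g ≠ [] := by
      intro h
      rw [h] at hsum
      simp at hsum
      omega
    refine ⟨⟨?_, ?_, ?_⟩, ?_, ?_⟩ <;> dsimp -failIfUnchanged only
    · simp only [List.sum_cons]; omega
    · intro a ha
      rcases List.mem_cons.1 ha with h | h
      · subst h; exact odd_one
      · exact hodd a h
    · rwa [last0_cons 1 hne]
    · have := List.length_pos_iff.2 hne
      simp only [List.length_cons]
      omega
    · simp⟩
  left_inv x := by
    apply Subtype.ext
    obtain ⟨⟨g, s⟩, ⟨hsum, hodd, hlast⟩, hlen, hhead⟩ := x
    dsimp only at hsum hodd hlast hlen hhead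
    have hne : g ≠ [] := by intro h; rw [h] at hlen; simp at hlen
    dsimp only
    simp only [Prod.mk.injEq]
    refine ⟨?_, by trivial⟩
    rw [← hhead]
    exact headI_cons_tail hne
  right_inv y := by
    apply Subtype.ext
    simp

/-- shrink a first gap `≥ 3` by 2 -/
def equivHead3 {n : ℕ} (hn : 3 ≤ n) :
    {x : List ℕ × ℕ // GoodP n x ∧ 2 ≤ x.1.length ∧ ¬ x.1.headI = 1} ≃
      {x : List ℕ × ℕ // GoodP (n-2) x ∧ 2 ≤ x.1.length} where
  toFun x := ⟨((x.1.1.headI - 2) :: x.1.1.tail, x.1.2), by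
    obtain ⟨⟨g, s⟩, ⟨hsum, hodd, hlast⟩, hlen, hhead⟩ := x
    dsimp only at *
    dsimp only at hsum hodd hlast hlen hhead
    have hne : g ≠ [] := by intro h; rw [h] at hlen; simp at hlen
    have htne : g.tail ≠ [] := by
      intro h
      have := congrArg List.length (headI_cons_tail hne)
      rw [h] at this
      simp at this
      omega
    have hoh : Odd g.headI := hodd _ (headI_mem hne)
    have hh3 : 3 ≤ g.headI := by
      rcases hoh with ⟨k, hk⟩
      omega
    have hsum' := congrArg List.sum (headI_cons_tail hne)
    simp only [List.sum_cons] at hsum'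
    refine ⟨⟨?_, ?_, ?_⟩, ?_⟩ <;> dsimp -failIfUnchanged only
    · simp only [List.sum_cons]; omega
    · intro a ha
      rcases List.mem_cons.1 ha with h | h
      · subst h
        rcases hoh with ⟨k, hk⟩
        exact ⟨k - 1, by omega⟩
      · exact hodd a (List.mem_of_mem_tail h)
    · rw [last0_cons _ htne]
      rwa [← last0_cons g.headI htne, headI_cons_tail hne]
    · simp only [List.length_cons]
      have := List.length_pos_iff.2 htne
      omega⟩
  invFun y := ⟨((y.1.1.headI + 2) :: y.1.1.tail, y.1.2), by
    obtain ⟨⟨g, s⟩, ⟨hsum, hodd, hlast⟩, hlen⟩ := y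
    dsimp only at *
    dsimp only at hsum hodd hlast hlen
    have hne : g ≠ [] := by intro h; rw [h] at hlen; simp at hlen
    have htne : g.tail ≠ [] := by
      intro h
      have := congrArg List.length (headI_cons_tail hne)
      rw [h] at this
      simp at this
      omega
    have hoh : Odd g.headI := hodd _ (headI_mem hne)
    have hsum' := congrArg List.sum (headI_cons_tail hne)
    simp only [List.sum_cons] at hsum'
    refine ⟨⟨?_, ?_, ?_⟩, ?_, ?_⟩ <;> dsimp -failIfUnchanged only
    · simp only [List.sum_cons]; omega
    · intro a ha
      rcases List.mem_cons.1 ha with h | h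
      · subst h
        rcases hoh with ⟨k, hk⟩
        exact ⟨k + 1, by omega⟩
      · exact hodd a (List.mem_of_mem_tail h)
    · rw [last0_cons _ htne]
      rwa [← last0_cons g.headI htne, headI_cons_tail hne]
    · simp only [List.length_cons]
      have := List.length_pos_iff.2 htne
      omega
    · simp only [List.headI_cons]
      rcases hoh with ⟨k, hk⟩
      omega⟩
  left_inv x := by
    apply Subtype.ext
    obtain ⟨⟨g, s⟩, ⟨hsum, hodd, hlast⟩, hlen, hhead⟩ := x
    dsimp only at hsum hodd hlast hlen hhead
    have hne : g ≠ [] := by intro h; rw [h] at hlen; simp at hlen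
    have hoh : Odd g.headI := hodd _ (headI_mem hne)
    have hh3 : 3 ≤ g.headI := by rcases hoh with ⟨k, hk⟩; omega
    dsimp only
    simp only [Prod.mk.injEq, List.headI_cons, List.tail_cons]
    refine ⟨?_, by trivial⟩
    rw [show g.headI - 2 + 2 = g.headI by omega]
    exact headI_cons_tail hne
  right_inv y := by
    apply Subtype.ext
    obtain ⟨⟨g, s⟩, ⟨hsum, hodd, hlast⟩, hlen⟩ := y
    have hne : g ≠ [] := by intro h; rw [h] at hlen; simp at hlen
    dsimp only
    simp only [Prod.mk.injEq, List.headI_cons, List.tail_cons]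
    refine ⟨?_, by trivial⟩
    rw [show g.headI + 2 - 2 = g.headI by omega]
    exact headI_cons_tail hne

lemma list_sum_one {g : List ℕ} (hodd : ∀ a ∈ g, Odd a) (hsum : g.sum = 1) : g = [1] := by
  cases g with
  | nil => simp at hsum
  | cons a l =>
    simp only [List.sum_cons] at hsum
    have ha : Odd a := hodd a (by simp)
    have ha1 : a = 1 := by rcases ha with ⟨k, hk⟩; omega
    subst ha1
    have hl : l.sum = 0 := by omega
    cases l with
    | nil => rfl
    | cons b m =>
      have : Odd b := hodd b (by simp)
      rcases this with ⟨k, hk⟩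
      simp only [List.sum_cons] at hl
      omega

lemma list_sum_two {g : List ℕ} (hodd : ∀ a ∈ g, Odd a) (hsum : g.sum = 2) : g = [1, 1] := by
  cases g with
  | nil => simp at hsum
  | cons a l =>
    simp only [List.sum_cons] at hsum
    have ha : Odd a := hodd a (by simp)
    have ha1 : a = 1 := by rcases ha with ⟨k, hk⟩; omega
    subst ha1
    have : l.sum = 1 := by omega
    rw [list_sum_one (fun a ha => hodd a (by simp [ha])) this]

lemma tc_one : tc 1 = 1 := by
  have : Unique (XT 1) := by
    refine ⟨⟨⟨([1], 0), by constructor <;> simp⟩⟩, ?_⟩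
    intro x
    obtain ⟨⟨g, s⟩, hsum, hodd, hlast⟩ := x
    dsimp only at hsum hodd hlast
    have hg := list_sum_one hodd hsum
    subst hg
    simp only [last0_single] at hlast
    have : s = 0 := by omega
    subst this
    rfl
  rw [tc, Nat.card_unique]

lemma tc_two : tc 2 = 1 := by
  have : Unique (XT 2) := by
    refine ⟨⟨⟨([1, 1], 0), ?_⟩⟩, ?_⟩
    · refine ⟨by simp, by intro a ha; simp at ha; simp [ha], ?_⟩
      rw [last0_cons 1 (by simp)]
      simp
    intro x
    obtain ⟨⟨g, s⟩, hsum, hodd, hlast⟩ := x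
    dsimp only at hsum hodd hlast
    have hg := list_sum_two hodd hsum
    subst hg
    rw [last0_cons 1 (by simp), last0_single] at hlast
    have : s = 0 := by omega
    subst this
    rfl
  rw [tc, Nat.card_unique]

lemma tc_rec {n : ℕ} (hn : 3 ≤ n) :
    (tc n : ℤ) = tc (n-1) + tc (n-2) + (if Odd n then 2 else 0) := by
  classical
  haveI := finite_sub n (fun x => GoodP n x ∧ 2 ≤ x.1.length) (fun x h => h.1)
  have h1 : tc n = Nat.card {x : List ℕ × ℕ // GoodP n x ∧ x.1.length = 1}
      + Nat.card {x : List ℕ × ℕ // GoodP n x ∧ ¬ x.1.length = 1} :=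
    card_partition (GoodP n) (fun x => x.1.length = 1)
  rw [card_not_len1 (by omega), card_len1] at h1
  have h2 : Nat.card {x : List ℕ × ℕ // GoodP n x ∧ 2 ≤ x.1.length} =
      Nat.card {x : List ℕ × ℕ // (GoodP n x ∧ 2 ≤ x.1.length) ∧ x.1.headI = 1}
      + Nat.card {x : List ℕ × ℕ // (GoodP n x ∧ 2 ≤ x.1.length) ∧ ¬ x.1.headI = 1} :=
    card_partition _ _
  have h3 : Nat.card {x : List ℕ × ℕ // (GoodP n x ∧ 2 ≤ x.1.length) ∧ x.1.headI = 1}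
      = tc (n-1) :=
    Nat.card_congr ((Equiv.subtypeEquivRight (fun x => and_assoc)).trans (equivHead1 (by omega)))
  have h4 : Nat.card {x : List ℕ × ℕ // (GoodP n x ∧ 2 ≤ x.1.length) ∧ ¬ x.1.headI = 1}
      = Nat.card {x : List ℕ × ℕ // GoodP (n-2) x ∧ 2 ≤ x.1.length} :=
    Nat.card_congr ((Equiv.subtypeEquivRight (fun x => and_assoc)).trans (equivHead3 hn))
  have h5 : tc (n-2) = Nat.card {x : List ℕ × ℕ // GoodP (n-2) x ∧ x.1.length = 1}
      + Nat.card {x : List ℕ × ℕ // GoodP (n-2) x ∧ ¬ x.1.length = 1} :=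
    card_partition (GoodP (n-2)) (fun x => x.1.length = 1)
  rw [card_not_len1 (by omega), card_len1] at h5
  have hodd2 : Odd (n-2) ↔ Odd n := by rw [Nat.odd_iff, Nat.odd_iff]; omega
  by_cases ho : Odd n
  · simp only [ho, hodd2, if_true, if_pos] at h1 h5 ⊢
    push_cast
    omega
  · simp only [ho, if_false, if_neg, hodd2] at h1 h5 ⊢
    push_cast
    omega


lemma bool_eq_of_iff {a b : Bool} (h : a = true ↔ b = true) : a = b := by
  cases a <;> cases b <;> simp_all

lemma ite_tf_iff {P : Prop} [Decidable P] : (if P then true else false) = true ↔ P := by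
  split <;> simp_all

section MainEquiv

variable {n : ℕ}

def cpf (c : ZMod n → Bool) : ℕ → Bool := fun j => c (j : ZMod n)

lemma cpf_period (c : ZMod n → Bool) (j : ℕ) : cpf c (j + n) = cpf c j := by
  unfold cpf
  congr 1
  push_cast [ZMod.natCast_self]
  ring

lemma cpf_add_cast (c : ZMod n → Bool) (j e : ℕ) :
    c ((j : ZMod n) + (e : ZMod n)) = cpf c (j + e) := by
  unfold cpf
  congr 1
  push_cast
  ring

lemma adm_exists_black [NeZero n] {c : ZMod n → Bool} (h : Admissible 2 n c) :
    ∃ j, cpf c j = true := by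
  obtain ⟨i, hi⟩ := h.1
  refine ⟨i.val, ?_⟩
  unfold cpf
  rwa [ZMod.natCast_rightInverse i]

noncomputable def ssf [NeZero n] (c : ZMod n → Bool) (h : Admissible 2 n c) : ℕ :=
  Nat.find (adm_exists_black h)

lemma ssf_black [NeZero n] {c : ZMod n → Bool} (h : Admissible 2 n c) :
    cpf c (ssf c h) = true := Nat.find_spec (adm_exists_black h)

lemma ssf_min [NeZero n] {c : ZMod n → Bool} (h : Admissible 2 n c) {j : ℕ}
    (hj : j < ssf c h) : cpf c j = false := by
  have := Nat.find_min (adm_exists_black h) hj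
  simpa using this

lemma ssf_lt [NeZero n] {c : ZMod n → Bool} (h : Admissible 2 n c) (hn : 0 < n) :
    ssf c h < n := by
  by_contra hc
  push_neg at hc
  have h1 : cpf c (ssf c h - n + n) = cpf c (ssf c h - n) := cpf_period c _
  rw [show ssf c h - n + n = ssf c h by omega] at h1
  have h2 := ssf_black h
  rw [h1] at h2
  have := ssf_min h (j := ssf c h - n) (by omega)
  rw [this] at h2
  exact Bool.false_ne_true h2

lemma adm_odd_hyp (hn : 0 < n) {c : ZMod n → Bool} (h : Admissible 2 n c) :
    ∀ i r, cpf c i = true → cpf c (i + r) = true → 0 < r → Odd (nxt (cpf c) i) := by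
  intro i r hi hir hr
  have hd1 : 0 < nxt (cpf c) i := nxt_pos _ i
  have hb : cpf c (i + nxt (cpf c) i) = true := nxt_black hr hir
  have key := h.2 (i : ZMod n) hi (nxt (cpf c) i) hd1
    (by rw [cpf_add_cast c i (nxt (cpf c) i)]; exact hb)
    (by intro e he1 he2; rw [cpf_add_cast c i e]; exact nxt_min he1 he2)
  obtain ⟨k, hk⟩ := key
  exact ⟨k, by omega⟩

lemma forward_good (hn : 0 < n) {c : ZMod n → Bool} (h : Admissible 2 n c) :
    haveI : NeZero n := ⟨hn.ne'⟩
    GoodP n (mkg (cpf c) n (ssf c h), ssf c h) ∧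
      Chr (cpf c) (ssf c h) n (mkg (cpf c) n (ssf c h)) := by
  haveI : NeZero n := ⟨hn.ne'⟩
  have hs := ssf_black h
  have hsn : cpf c (ssf c h + n) = true := by rw [cpf_period]; exact hs
  obtain ⟨hsum, hchr, hlastf⟩ := mkg_spec n (ssf c h) hs hsn
  obtain ⟨hl1, hl2, hl3⟩ := hlastf hn
  have hodds := mkg_odd (adm_odd_hyp hn h) n (ssf c h) hs hsn
  have hslast : ssf c h < last0 (mkg (cpf c) n (ssf c h)) := by
    by_contra hc
    push_neg at hc
    set b := last0 (mkg (cpf c) n (ssf c h)) with hb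
    have h1 : cpf c (ssf c h - b + n) = cpf c (ssf c h - b) := cpf_period c _
    rw [show ssf c h - b + n = ssf c h + n - b by omega] at h1
    rw [h1] at hl1
    have := ssf_min h (j := ssf c h - b) (by omega)
    rw [this] at hl1
    exact Bool.false_ne_true hl1
  exact ⟨⟨hsum, hodds, hslast⟩, hchr⟩

open Classical in
noncomputable def gcol (n : ℕ) (g : List ℕ) (s : ℕ) : ZMod n → Bool :=
  fun i => if (∃ t, t < g.length ∧ i = ((s + (g.take t).sum : ℕ) : ZMod n)) then true else false

lemma gcol_iff (g : List ℕ) (s : ℕ) (j : ℕ) :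
    cpf (gcol n g s) j = true ↔ ∃ t, t < g.length ∧ j ≡ s + (g.take t).sum [MOD n] := by
  unfold cpf gcol
  rw [ite_tf_iff]
  exact exists_congr fun t => and_congr_right fun _ => ZMod.natCast_eq_natCast_iff j _ n

lemma GoodP.Qlt {g : List ℕ} {s : ℕ} (hx : GoodP n (g, s)) {t : ℕ} (ht : t < g.length) :
    s + (g.take t).sum < n := by
  have h1 := sum_take_add_last0_le (g := g) ht
  have h2 := hx.2.2
  have h3 := hx.1
  dsimp only at h2 h3
  omega

lemma chr_gcol {g : List ℕ} {s : ℕ} (hx : GoodP n (g, s)) : Chr (cpf (gcol n g s)) s n g := by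
  intro j hj1 hj2
  rw [gcol_iff]
  constructor
  · rintro ⟨t, ht, hmod⟩
    refine ⟨t, ht, modeq_eq_of_window hmod hj1 hj2 (by omega) ?_⟩
    have := hx.Qlt ht
    omega
  · rintro ⟨t, ht, heq⟩
    exact ⟨t, ht, by rw [heq]⟩

lemma gcol_black_s {g : List ℕ} {s : ℕ} (hn : 0 < n) (hx : GoodP n (g, s)) :
    cpf (gcol n g s) s = true := by
  rw [gcol_iff]
  have hne := hx.ne_nil hn
  refine ⟨0, ?_, by simp [Nat.ModEq.refl]⟩
  dsimp only at hne
  have := List.length_pos_iff.2 hne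
  omega

lemma gcol_adm {g : List ℕ} {s : ℕ} (hn : 0 < n) (hx : GoodP n (g, s)) :
    Admissible 2 n (gcol n g s) := by
  haveI : NeZero n := ⟨hn.ne'⟩
  constructor
  · exact ⟨(s : ZMod n), gcol_black_s hn hx⟩
  · intro i hi d hd hid hwh
    have hvlt : i.val < n := ZMod.val_lt i
    set j := if i.val < s then i.val + n else i.val with hjdef
    have hji : (j : ZMod n) = i := by
      rw [hjdef]
      split
      · push_cast [ZMod.natCast_self]
        rw [add_zero]
        exact ZMod.natCast_rightInverse i
      · exact ZMod.natCast_rightInverse i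
    have hslt : s < n := by
      have h2 := hx.2.2
      have h3 := hx.1
      have h4 : last0 g ≤ g.sum := last0_le_sum
      dsimp only at h2 h3
      omega
    have hj1 : s ≤ j := by rw [hjdef]; split <;> omega
    have hj2 : j < s + n := by rw [hjdef]; split <;> omega
    have hcpj : cpf (gcol n g s) j = true := by
      unfold cpf
      rw [hji]
      exact hi
    obtain ⟨t, ht, hjQ⟩ := (chr_gcol hx j hj1 hj2).1 hcpj
    have hdn : d ≤ n := by
      by_contra hc
      push_neg at hc
      have hwn := hwh n hn hc
      rw [ZMod.natCast_self, add_zero, hi] at hwn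
      simp at hwn
    have hpos := hx.pos
    dsimp only at hpos
    have hsucc : (g.take (t+1)).sum = (g.take t).sum + g[t] := List.sum_take_succ _ _ ht
    have hgpos : 0 < g[t] := hpos _ (List.getElem_mem ht)
    have htake_le : (g.take (t+1)).sum ≤ g.sum := by
      have h1 := sum_take_le_sum_take hpos (t := t+1) (t' := g.length)
        (by omega) (le_refl _)
      rwa [List.take_length] at h1
    have hgsum : g.sum = n := hx.1
    have hblacknext : cpf (gcol n g s) (j + g[t]) = true := by
      rcases Nat.eq_or_lt_of_le (Nat.succ_le_of_lt ht) with hteq | htlt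
      · have hjn : j + g[t] = s + n := by
          have : (g.take (t+1)).sum = n := by
            rw [show t+1 = g.length from hteq, List.take_length, hgsum]
          omega
        rw [hjn, cpf_period]
        exact gcol_black_s hn hx
      · have hQ : s + (g.take (t+1)).sum < n := hx.Qlt (show t+1 < g.length by omega)
        exact (chr_gcol hx (j + g[t]) (by omega) (by omega)).2 ⟨t+1, htlt, by omega⟩
    have hwhites : ∀ e, 0 < e → e < g[t] → cpf (gcol n g s) (j + e) = false := by
      intro e he1 he2
      have hwin : j + e < s + n := by omega
      cases hbe : cpf (gcol n g s) (j + e) with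
      | false => rfl
      | true =>
        exfalso
        obtain ⟨r, hr, hre⟩ := (chr_gcol hx (j + e) (by omega) hwin).1 hbe
        rcases Nat.le_total r t with hrt | hrt
        · have := sum_take_le_sum_take hpos hrt (le_of_lt ht)
          omega
        · have hrt' : t + 1 ≤ r := by
            rcases Nat.eq_or_lt_of_le hrt with h' | h'
            · exfalso; subst h'; omega
            · omega
          have := sum_take_le_sum_take hpos hrt' (le_of_lt hr)
          omega
    rcases lt_trichotomy d g[t] with hlt | heq | hgt
    · exfalso
      have hbd : cpf (gcol n g s) (j + d) = true := by
        rw [← cpf_add_cast (gcol n g s) j d, hji]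
        exact hid
      rw [hwhites d hd hlt] at hbd
      exact Bool.false_ne_true hbd
    · have hodd : Odd g[t] := hx.2.1 g[t] (List.getElem_mem ht)
      obtain ⟨k, hk⟩ := hodd
      exact ⟨k, by omega⟩
    · exfalso
      have hw := hwh g[t] hgpos hgt
      rw [← cpf_add_cast (gcol n g s) j g[t], hji] at hblacknext
      rw [hw] at hblacknext
      exact Bool.false_ne_true hblacknext

end MainEquiv

section MainEquiv2
variable {n : ℕ}

lemma ssf_gcol {g : List ℕ} {s : ℕ} [NeZero n] (hn : 0 < n) (hx : GoodP n (g, s))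
    (hadm : Admissible 2 n (gcol n g s)) : ssf (gcol n g s) hadm = s := by
  rw [ssf, Nat.find_eq_iff]
  refine ⟨gcol_black_s hn hx, ?_⟩
  intro j hj hcp
  rw [gcol_iff] at hcp
  obtain ⟨t, ht, hmod⟩ := hcp
  have hQ2 := hx.Qlt ht
  have hle : j ≤ s + (g.take t).sum := by omega
  obtain ⟨k, hk⟩ := (Nat.modEq_iff_dvd' hle).1 hmod
  rcases k with _ | k
  · omega
  · have : n ≤ n * (k+1) := Nat.le_mul_of_pos_right n (by omega)
    omega

lemma mkg_gcol {g : List ℕ} {s : ℕ} (hn : 0 < n) (hx : GoodP n (g, s)) :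
    mkg (cpf (gcol n g s)) n s = g := by
  have hblack := gcol_black_s hn hx
  have hsum : g.sum = n := hx.1
  have h1 := mkg_eq_of_chr g s hx.pos hblack
    (by rw [hsum, cpf_period]; exact hblack)
    (by rw [hsum]; exact chr_gcol hx)
  rwa [hsum] at h1

lemma lift_window [NeZero n] (s : ℕ) (hs : s < n) (i : ZMod n) :
    ∃ j : ℕ, (j : ZMod n) = i ∧ s ≤ j ∧ j < s + n := by
  refine ⟨if i.val < s then i.val + n else i.val, ?_, ?_, ?_⟩
  · split
    · push_cast [ZMod.natCast_self]
      rw [add_zero]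
      exact ZMod.natCast_rightInverse i
    · exact ZMod.natCast_rightInverse i
  · have := ZMod.val_lt i; split <;> omega
  · have := ZMod.val_lt i; split <;> omega

noncomputable def mainEquiv (hn : 0 < n) : {c : ZMod n → Bool // Admissible 2 n c} ≃ XT n :=
  haveI : NeZero n := ⟨hn.ne'⟩
  { toFun := fun x => ⟨(mkg (cpf x.1) n (ssf x.1 x.2), ssf x.1 x.2), (forward_good hn x.2).1⟩
    invFun := fun y => ⟨gcol n y.1.1 y.1.2, gcol_adm hn y.2⟩
    left_inv := by
      haveI : NeZero n := ⟨hn.ne'⟩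
      intro x
      obtain ⟨c, hadm⟩ := x
      apply Subtype.ext
      dsimp only
      funext i
      obtain ⟨hgood, hchr⟩ := forward_good hn hadm
      have hslt : ssf c hadm < n := ssf_lt hadm hn
      obtain ⟨j, hji, hj1, hj2⟩ := lift_window (ssf c hadm) hslt i
      apply bool_eq_of_iff
      have lhs : (gcol n (mkg (cpf c) n (ssf c hadm)) (ssf c hadm) i = true) ↔
          ∃ t, t < (mkg (cpf c) n (ssf c hadm)).length ∧
            j ≡ ssf c hadm + ((mkg (cpf c) n (ssf c hadm)).take t).sum [MOD n] := by
        rw [← hji]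
        exact gcol_iff _ _ j
      have hmid : (∃ t, t < (mkg (cpf c) n (ssf c hadm)).length ∧
            j ≡ ssf c hadm + ((mkg (cpf c) n (ssf c hadm)).take t).sum [MOD n]) ↔
          (∃ t, t < (mkg (cpf c) n (ssf c hadm)).length ∧
            j = ssf c hadm + ((mkg (cpf c) n (ssf c hadm)).take t).sum) := by
        constructor
        · rintro ⟨t, ht, hmod⟩
          have hQ2 := hgood.Qlt ht
          exact ⟨t, ht, modeq_eq_of_window hmod hj1 hj2 (by omega) (by omega)⟩
        · rintro ⟨t, ht, he⟩
          exact ⟨t, ht, by rw [he]⟩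
      have rhs := hchr j hj1 hj2
      rw [lhs, hmid, ← rhs]
      unfold cpf
      rw [hji]
    right_inv := by
      haveI : NeZero n := ⟨hn.ne'⟩
      intro y
      obtain ⟨⟨g, s⟩, hx⟩ := y
      apply Subtype.ext
      dsimp only
      have hs := ssf_gcol hn hx (gcol_adm hn hx)
      rw [hs, mkg_gcol hn hx] }

lemma card_adm (hn : 0 < n) :
    Nat.card {c : ZMod n → Bool // Admissible 2 n c} = tc n :=
  Nat.card_congr (mainEquiv hn)

end MainEquiv2

/-- The associated Mersenne numbers count the `2`-admissible colorings of a
cycle of length `n`. -/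
theorem stmt3 (a : ℕ → ℤ) (h0 : a 0 = 0) (h1 : a 1 = 1) (h2 : a 2 = 1)
    (hrec : ∀ n : ℕ, 3 ≤ n → a n = a (n - 1) + a (n - 2) + 1 - (-1) ^ n) :
    ∀ n : ℕ, 1 ≤ n →
      a n = Nat.card {c : ZMod n → Bool // Admissible 2 n c} := by
  have key : ∀ n : ℕ, 1 ≤ n → a n = (tc n : ℤ) := by
    intro n
    induction n using Nat.strong_induction_on with
    | _ n IH =>
      intro hn
      rcases Nat.lt_or_ge n 3 with h3 | h3
      · interval_cases n
        · rw [h1, tc_one]; norm_num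
        · rw [h2, tc_two]; norm_num
      · have e1 := hrec n h3
        have e2 := IH (n-1) (by omega) (by omega)
        have e3 := IH (n-2) (by omega) (by omega)
        have e4 := tc_rec h3
        have e5 : (1 : ℤ) - (-1)^n = if Odd n then 2 else 0 := by
          by_cases ho : Odd n
          · rw [if_pos ho, Odd.neg_one_pow ho]; ring
          · rw [if_neg ho, Even.neg_one_pow (Nat.not_odd_iff_even.1 ho)]; ring
        rw [e1, e2, e3, e4]
        linarith [e5]
  intro n hn
  rw [card_adm (show 0 < n by omega)]
  exact key n hn
end

section
/- For n ≥ q+1, there is a bijection between the set of q-admissible colorings of a cycle of length n−q and the set of q-admissible colorings of a cycle of length n whose beads at positions 1,2,...,q are all white. -/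
private lemma cast_sub_red {N : ℕ} {x : ℕ} (h : N ≤ x) :
    ((x : ℕ) : ZMod N) = ((x - N : ℕ) : ZMod N) := by
  conv_lhs => rw [show x = N + (x - N) by omega]
  push_cast
  simp

/-- Characterization of admissibility purely in terms of natural number indices. -/
private lemma admissible_iff_nat (q N : ℕ) (hN : 0 < N) (c : ZMod N → Bool) :
    Admissible q N c ↔
      ((∃ a : ℕ, c (a : ZMod N) = true) ∧
      ∀ a : ℕ, a < N → c (a : ZMod N) = true →
        ∀ d : ℕ, 0 < d → d ≤ N → c ((a + d : ℕ) : ZMod N) = true →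
          (∀ e : ℕ, 0 < e → e < d → c ((a + e : ℕ) : ZMod N) = false) →
          q ∣ d - 1) := by
  haveI : NeZero N := ⟨hN.ne'⟩
  constructor
  · rintro ⟨⟨i, hi⟩, h⟩
    refine ⟨⟨i.val, by rwa [ZMod.natCast_rightInverse i]⟩, ?_⟩
    intro a _ hab d hd _ hend hwhite
    refine h (a : ZMod N) hab d hd ?_ ?_
    · rwa [show ((a : ZMod N) + (d : ZMod N)) = ((a + d : ℕ) : ZMod N) by push_cast; ring]
    · intro e he hed
      rw [show ((a : ZMod N) + (e : ZMod N)) = ((a + e : ℕ) : ZMod N) by push_cast; ring]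
      exact hwhite e he hed
  · rintro ⟨⟨a, ha⟩, h⟩
    refine ⟨⟨(a : ZMod N), ha⟩, ?_⟩
    intro i hi d hd hend hwhite
    by_cases hdN : d ≤ N
    · have h1 : ((i.val : ℕ) : ZMod N) = i := ZMod.natCast_rightInverse i
      refine h i.val (ZMod.val_lt i) (by rwa [h1]) d hd hdN ?_ ?_
      · rwa [show ((i.val + d : ℕ) : ZMod N) = i + (d : ZMod N) by push_cast; rw [h1]]
      · intro e he hed
        rw [show ((i.val + e : ℕ) : ZMod N) = i + (e : ZMod N) by push_cast; rw [h1]]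
        exact hwhite e he hed
    · exfalso
      have := hwhite N hN (by omega)
      rw [ZMod.natCast_self, add_zero, hi] at this
      simp at this

private def Fmap (q n : ℕ) (c : ZMod (n - q) → Bool) : ZMod n → Bool :=
  fun j => if 1 ≤ j.val ∧ j.val ≤ q then false else c ((j.val - q : ℕ) : ZMod (n - q))

private def Gmap (q n : ℕ) (c : ZMod n → Bool) : ZMod (n - q) → Bool :=
  fun k => if k.val = 0 then c 0 else c ((k.val + q : ℕ) : ZMod n)

private lemma Fval (q n : ℕ) (c : ZMod (n - q) → Bool) (t : ℕ) (ht : t < n) :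
    Fmap q n c (t : ZMod n) =
      if 1 ≤ t ∧ t ≤ q then false else c ((t - q : ℕ) : ZMod (n - q)) := by
  unfold Fmap; rw [ZMod.val_cast_of_lt ht]

private lemma Gval (q n : ℕ) (c : ZMod n → Bool) (t : ℕ) (ht : t < n - q) :
    Gmap q n c (t : ZMod (n - q)) =
      if t = 0 then c 0 else c ((t + q : ℕ) : ZMod n) := by
  unfold Gmap; rw [ZMod.val_cast_of_lt ht]

private lemma F_white (q n : ℕ) (hn : q + 1 ≤ n) (c : ZMod (n - q) → Bool) :
    ∀ j : ℕ, 1 ≤ j → j ≤ q → Fmap q n c (j : ZMod n) = false := by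
  intro j h1 h2
  rw [Fval q n c j (by omega)]
  simp [h1, h2]

/-- `Fmap` preserves admissibility. -/
private lemma adm_F (q n : ℕ) (hq : 1 ≤ q) (hn : q + 1 ≤ n) (c : ZMod (n - q) → Bool)
    (h : Admissible q (n - q) c) : Admissible q n (Fmap q n c) := by
  have hm : 0 < n - q := by omega
  rw [admissible_iff_nat q (n - q) hm] at h
  rw [admissible_iff_nat q n (by omega)]
  obtain ⟨⟨a0, ha0⟩, h⟩ := h
  constructor
  · -- existence of a black bead
    set b := a0 % (n - q) with hb
    have hb1 : c ((b : ℕ) : ZMod (n - q)) = true := by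
      rwa [hb, ZMod.natCast_mod]
    have hblt : b < n - q := Nat.mod_lt _ hm
    by_cases hb0 : b = 0
    · refine ⟨0, ?_⟩
      rw [show ((0 : ℕ) : ZMod n) = ((0 : ℕ) : ZMod n) from rfl, Fval q n c 0 (by omega)]
      simp only [show ¬(1 ≤ 0 ∧ 0 ≤ q) by omega, if_false]
      rw [show (0 - q : ℕ) = 0 from by omega]
      rwa [hb0] at hb1
    · refine ⟨b + q, ?_⟩
      rw [Fval q n c (b + q) (by omega)]
      simp only [show ¬(1 ≤ b + q ∧ b + q ≤ q) by omega, if_false]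
      rw [show (b + q - q : ℕ) = b from by omega]
      exact hb1
  · intro a ha hblack d hd hdn hend hwhite
    rw [Fval q n c a ha] at hblack
    have hablock : ¬(1 ≤ a ∧ a ≤ q) := by
      intro hc; rw [if_pos hc] at hblack; exact Bool.false_ne_true hblack
    rw [if_neg hablock] at hblack
    -- helper for reading off values of Fmap at positions < n
    rcases (by omega : a = 0 ∨ q + 1 ≤ a) with rfl | haq
    · -- a = 0
      rw [show (0 - q : ℕ) = 0 from by omega] at hblack
      -- d must exceed q
      have hdq : q + 1 ≤ d := by
        by_contra hcon
        have h1 : 1 ≤ d ∧ d ≤ q := by omega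
        have := hend
        rw [show (0 + d : ℕ) = d from by omega, Fval q n c d (by omega), if_pos h1] at this
        exact Bool.false_ne_true this
      set D := d - q with hD
      have hq1 : q ∣ D - 1 := by
        refine h 0 hm hblack D (by omega) (by omega) ?_ ?_
        · -- endpoint
          rcases (by omega : D < n - q ∨ D = n - q) with hlt | heq
          · rw [show (0 + D : ℕ) = D from by omega]
            have : Fmap q n c ((D + q : ℕ) : ZMod n) = c ((D : ℕ) : ZMod (n - q)) := by
              rw [Fval q n c (D + q) (by omega)]
              simp only [show ¬(1 ≤ D + q ∧ D + q ≤ q) by omega, if_false]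
              rw [show (D + q - q : ℕ) = D from by omega]
            rw [← this, show (D + q : ℕ) = 0 + d from by omega]
            exact hend
          · rw [show (0 + D : ℕ) = n - q from by omega, ZMod.natCast_self]
            have h2 : ((0 + d : ℕ) : ZMod n) = ((0 : ℕ) : ZMod n) := by
              rw [show (0 + d : ℕ) = n from by omega, ZMod.natCast_self, Nat.cast_zero]
            have := hend
            rw [h2, Fval q n c 0 (by omega)] at this
            simp only [show ¬(1 ≤ 0 ∧ 0 ≤ q) by omega, if_false] at this
            rw [show (0 - q : ℕ) = 0 from by omega] at this
            rw [show ((0 : ZMod (n - q))) = ((0 : ℕ) : ZMod (n - q)) from by simp]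
            exact this
        · -- whites
          intro e he heD
          rw [show (0 + e : ℕ) = e from by omega]
          have : Fmap q n c ((e + q : ℕ) : ZMod n) = c ((e : ℕ) : ZMod (n - q)) := by
            rw [Fval q n c (e + q) (by omega)]
            simp only [show ¬(1 ≤ e + q ∧ e + q ≤ q) by omega, if_false]
            rw [show (e + q - q : ℕ) = e from by omega]
          rw [← this, show ((e + q : ℕ) : ZMod n) = ((0 + (e + q) : ℕ) : ZMod n) from by
            rw [Nat.zero_add]]
          exact hwhite (e + q) (by omega) (by omega)
      obtain ⟨k, hk⟩ := hq1
      exact ⟨k + 1, by rw [Nat.mul_add, Nat.mul_one]; omega⟩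
    · -- q + 1 ≤ a
      set b := a - q with hbdef
      have hb1 : 1 ≤ b := by omega
      have hbm : b < n - q := by omega
      rcases (by omega : a + d < n ∨ n ≤ a + d) with hlt | hge
      · -- no wrap
        refine h b hbm hblack d hd (by omega) ?_ ?_
        · rw [show ((b + d : ℕ) : ZMod (n - q)) = ((b + d : ℕ) : ZMod (n - q)) from rfl]
          have : Fmap q n c ((a + d : ℕ) : ZMod n) = c ((b + d : ℕ) : ZMod (n - q)) := by
            rw [Fval q n c (a + d) hlt]
            simp only [show ¬(1 ≤ a + d ∧ a + d ≤ q) by omega, if_false]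
            rw [show (a + d - q : ℕ) = b + d from by omega]
          rw [← this]; exact hend
        · intro e he hed
          have : Fmap q n c ((a + e : ℕ) : ZMod n) = c ((b + e : ℕ) : ZMod (n - q)) := by
            rw [Fval q n c (a + e) (by omega)]
            simp only [show ¬(1 ≤ a + e ∧ a + e ≤ q) by omega, if_false]
            rw [show (a + e - q : ℕ) = b + e from by omega]
          rw [← this]; exact hwhite e he hed
      · -- wrap
        set r := a + d - n with hrdef
        have hra : r ≤ a := by omega
        have hendr : Fmap q n c ((r : ℕ) : ZMod n) = true := by
          rw [hrdef, ← cast_sub_red (show n ≤ a + d from hge)]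
          exact hend
        have hrblock : ¬(1 ≤ r ∧ r ≤ q) := by
          intro hc
          rw [Fval q n c r (by omega), if_pos hc] at hendr
          exact Bool.false_ne_true hendr
        rcases (by omega : r = 0 ∨ q + 1 ≤ r) with hr0 | hrq
        · -- r = 0 : a + d = n
          refine h b hbm hblack d hd (by omega) ?_ ?_
          · rw [show (b + d : ℕ) = n - q from by omega, ZMod.natCast_self]
            rw [Fval q n c r (by omega), hr0] at hendr
            simp only [show ¬(1 ≤ 0 ∧ 0 ≤ q) by omega, if_false] at hendr
            rw [show (0 - q : ℕ) = 0 from by omega] at hendr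
            rw [show ((0 : ZMod (n - q))) = ((0 : ℕ) : ZMod (n - q)) from by simp]
            exact hendr
          · intro e he hed
            have : Fmap q n c ((a + e : ℕ) : ZMod n) = c ((b + e : ℕ) : ZMod (n - q)) := by
              rw [Fval q n c (a + e) (by omega)]
              simp only [show ¬(1 ≤ a + e ∧ a + e ≤ q) by omega, if_false]
              rw [show (a + e - q : ℕ) = b + e from by omega]
            rw [← this]; exact hwhite e he hed
        · -- r ≥ q + 1
          set D := d - q with hD
          have hDpos : 0 < D := by omega
          have hq1 : q ∣ D - 1 := by
            refine h b hbm hblack D hDpos (by omega) ?_ ?_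
            · -- endpoint : b + D = (n - q) + (r - q)
              rw [show ((b + D : ℕ) : ZMod (n - q)) =
                  ((b + D - (n - q) : ℕ) : ZMod (n - q)) from
                  cast_sub_red (by omega)]
              rw [show (b + D - (n - q) : ℕ) = r - q from by omega]
              rw [Fval q n c r (by omega), if_neg hrblock] at hendr
              exact hendr
            · intro e he heD
              rcases (by omega : b + e < n - q ∨ n - q ≤ b + e) with hp | hp
              · have : Fmap q n c ((a + e : ℕ) : ZMod n) = c ((b + e : ℕ) : ZMod (n - q)) := by
                  rw [Fval q n c (a + e) (by omega)]
                  simp only [show ¬(1 ≤ a + e ∧ a + e ≤ q) by omega, if_false]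
                  rw [show (a + e - q : ℕ) = b + e from by omega]
                rw [← this]; exact hwhite e he (by omega)
              · -- b + e ≥ n - q ; set p1 = b + e - (n - q) = a + e - n
                set p1 := b + e - (n - q) with hp1def
                have hp1lt : p1 < n - q := by omega
                rw [show ((b + e : ℕ) : ZMod (n - q)) = ((p1 : ℕ) : ZMod (n - q)) from
                  cast_sub_red hp]
                rcases (by omega : p1 = 0 ∨ 1 ≤ p1) with hp10 | hp11
                · -- position 0 of c ; corresponds to position n ≡ 0 of Fmap, white since
                  -- e' = n - a is strictly inside (0, d)
                  have hw := hwhite (n - a) (by omega) (by omega)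
                  rw [show ((a + (n - a) : ℕ) : ZMod n) = ((0 : ℕ) : ZMod n) from by
                    rw [show (a + (n - a) : ℕ) = n from by omega, ZMod.natCast_self,
                      Nat.cast_zero]] at hw
                  rw [Fval q n c 0 (by omega)] at hw
                  simp only [show ¬(1 ≤ 0 ∧ 0 ≤ q) by omega, if_false] at hw
                  rw [show (0 - q : ℕ) = 0 from by omega] at hw
                  rw [hp10]; exact hw
                · -- c p1 = Fmap (p1 + q) which is white
                  have hw := hwhite (e + q) (by omega) (by omega)
                  rw [show ((a + (e + q) : ℕ) : ZMod n) = ((p1 + q : ℕ) : ZMod n) from by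
                    rw [show (a + (e + q) : ℕ) = n + (p1 + q) from by omega]
                    push_cast; simp] at hw
                  rw [Fval q n c (p1 + q) (by omega)] at hw
                  simp only [show ¬(1 ≤ p1 + q ∧ p1 + q ≤ q) by omega, if_false] at hw
                  rw [show (p1 + q - q : ℕ) = p1 from by omega] at hw
                  exact hw
          obtain ⟨k, hk⟩ := hq1
          exact ⟨k + 1, by rw [Nat.mul_add, Nat.mul_one]; omega⟩


/-- `Gmap` preserves admissibility, given that positions `1,…,q` are white. -/
private lemma adm_G (q n : ℕ) (hq : 1 ≤ q) (hn : q + 1 ≤ n) (c : ZMod n → Bool)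
    (h : Admissible q n c) (hw : ∀ j : ℕ, 1 ≤ j → j ≤ q → c (j : ZMod n) = false) :
    Admissible q (n - q) (Gmap q n c) := by
  have hm : 0 < n - q := by omega
  rw [admissible_iff_nat q n (by omega)] at h
  rw [admissible_iff_nat q (n - q) hm]
  obtain ⟨⟨a0, ha0⟩, h⟩ := h
  constructor
  · -- existence of a black bead
    set b := a0 % n with hb
    have hb1 : c ((b : ℕ) : ZMod n) = true := by rwa [hb, ZMod.natCast_mod]
    have hblt : b < n := Nat.mod_lt _ (by omega)
    have hbblock : ¬(1 ≤ b ∧ b ≤ q) := by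
      intro hc
      rw [hw b hc.1 hc.2] at hb1
      exact Bool.false_ne_true hb1
    rcases (by omega : b = 0 ∨ q + 1 ≤ b) with hb0 | hbq
    · refine ⟨0, ?_⟩
      rw [Gval q n c 0 hm, if_pos rfl]
      rw [hb0] at hb1
      rwa [show ((0 : ZMod n)) = ((0 : ℕ) : ZMod n) from by simp]
    · refine ⟨b - q, ?_⟩
      rw [Gval q n c (b - q) (by omega), if_neg (by omega)]
      rwa [show (b - q + q : ℕ) = b from by omega]
  · intro a ha hblack d hd hdm hend hwhite
    rw [Gval q n c a ha] at hblack
    rcases (by omega : a = 0 ∨ 1 ≤ a) with rfl | ha1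
    · -- a = 0
      rw [if_pos rfl] at hblack
      have hc0 : c ((0 : ℕ) : ZMod n) = true := by
        rwa [show ((0 : ℕ) : ZMod n) = (0 : ZMod n) from by simp]
      have hq1 : q ∣ (d + q) - 1 := by
        refine h 0 (by omega) hc0 (d + q) (by omega) (by omega) ?_ ?_
        · -- endpoint
          rcases (by omega : d < n - q ∨ d = n - q) with hlt | heq
          · have := hend
            rw [show (0 + d : ℕ) = d from by omega, Gval q n c d hlt,
              if_neg (by omega)] at this
            rwa [show (0 + (d + q) : ℕ) = d + q from by omega]
          · have := hend
            rw [show (0 + d : ℕ) = n - q from by omega, ZMod.natCast_self,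
              show ((0 : ZMod (n - q))) = ((0 : ℕ) : ZMod (n - q)) from by simp,
              Gval q n c 0 hm, if_pos rfl] at this
            rw [show (0 + (d + q) : ℕ) = n from by omega, ZMod.natCast_self]
            rwa [show ((0 : ZMod n)) = ((0 : ℕ) : ZMod n) from by simp] at this ⊢
        · -- whites
          intro e' he' hed
          rw [show (0 + e' : ℕ) = e' from by omega]
          rcases (by omega : e' ≤ q ∨ q + 1 ≤ e') with hle | hgt
          · exact hw e' he' hle
          · have := hwhite (e' - q) (by omega) (by omega)
            rw [show (0 + (e' - q) : ℕ) = e' - q from by omega,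
              Gval q n c (e' - q) (by omega), if_neg (by omega),
              show (e' - q + q : ℕ) = e' from by omega] at this
            exact this
      have := Nat.dvd_sub hq1 (dvd_refl q)
      rwa [show (d + q) - 1 - q = d - 1 from by omega] at this
    · -- 1 ≤ a
      rw [if_neg (by omega)] at hblack
      have haqn : a + q < n := by omega
      rcases (by omega : a + d < n - q ∨ n - q ≤ a + d) with hlt | hge
      · -- no wrap
        refine h (a + q) haqn hblack d hd (by omega) ?_ ?_
        · have := hend
          rw [Gval q n c (a + d) hlt, if_neg (by omega),
            show (a + d + q : ℕ) = a + q + d from by omega] at this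
          exact this
        · intro e he hed
          have := hwhite e he hed
          rw [Gval q n c (a + e) (by omega), if_neg (by omega),
            show (a + e + q : ℕ) = a + q + e from by omega] at this
          exact this
      · -- wrap
        have hendr : Gmap q n c ((a + d - (n - q) : ℕ) : ZMod (n - q)) = true := by
          rw [← cast_sub_red hge]; exact hend
        rcases (by omega : a + d - (n - q) = 0 ∨ 1 ≤ a + d - (n - q)) with hr0 | hr1
        · -- r = 0 : a + d = n - q
          have hadm : a + d = n - q := by omega
          rw [hr0, Nat.cast_zero, show ((0 : ZMod (n - q))) = ((0 : ℕ) : ZMod (n - q)) from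
            by simp, Gval q n c 0 hm, if_pos rfl] at hendr
          refine h (a + q) haqn hblack d hd (by omega) ?_ ?_
          · rw [show (a + q + d : ℕ) = n from by omega, ZMod.natCast_self]
            rwa [show ((0 : ZMod n)) = ((0 : ℕ) : ZMod n) from by simp] at hendr ⊢
          · intro e he hed
            have := hwhite e he hed
            rw [Gval q n c (a + e) (by omega), if_neg (by omega),
              show (a + e + q : ℕ) = a + q + e from by omega] at this
            exact this
        · -- r ≥ 1
          have hrm : a + d - (n - q) < n - q := by omega
          rw [Gval q n c (a + d - (n - q)) hrm, if_neg (by omega)] at hendr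
          have hq1 : q ∣ (d + q) - 1 := by
            refine h (a + q) haqn hblack (d + q) (by omega) (by omega) ?_ ?_
            · -- endpoint : a + q + (d + q) = n + (r + q)
              rw [show ((a + q + (d + q) : ℕ) : ZMod n) =
                  ((a + q + (d + q) - n : ℕ) : ZMod n) from cast_sub_red (by omega),
                show (a + q + (d + q) - n : ℕ) = a + d - (n - q) + q from by omega]
              exact hendr
            · -- whites
              intro e' he' hed'
              rcases (by omega : a + q + e' < n ∨ n ≤ a + q + e') with hp | hp
              · -- no wrap for this white position
                have he'd : e' < d := by omega
                have := hwhite e' he' he'd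
                rw [Gval q n c (a + e') (by omega), if_neg (by omega),
                  show (a + e' + q : ℕ) = a + q + e' from by omega] at this
                exact this
              · -- wraps : position is a + q + e' - n
                rw [show ((a + q + e' : ℕ) : ZMod n) =
                    ((a + q + e' - n : ℕ) : ZMod n) from cast_sub_red hp]
                rcases (by omega : a + q + e' - n = 0 ∨ 1 ≤ a + q + e' - n ∧
                    a + q + e' - n ≤ q ∨ q + 1 ≤ a + q + e' - n) with hp0 | hpb | hph
                · -- position 0 : white because m - a is strictly inside (0, d)
                  have hma : 0 < n - q - a := by omega
                  have hmad : n - q - a < d := by omega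
                  have := hwhite (n - q - a) hma hmad
                  rw [show ((a + (n - q - a) : ℕ) : ZMod (n - q)) =
                      ((0 : ℕ) : ZMod (n - q)) from by
                      rw [show (a + (n - q - a) : ℕ) = n - q from by omega,
                        ZMod.natCast_self, Nat.cast_zero],
                    Gval q n c 0 hm, if_pos rfl] at this
                  rw [hp0, Nat.cast_zero]
                  rwa [show ((0 : ZMod n)) = ((0 : ℕ) : ZMod n) from by simp] at this ⊢
                · -- in the white block
                  exact hw _ hpb.1 hpb.2
                · -- corresponds to e = e' - q in (0, d)
                  have key := hwhite (e' - q) (by omega) (by omega)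
                  rw [show ((a + (e' - q) : ℕ) : ZMod (n - q)) =
                      ((a + (e' - q) - (n - q) : ℕ) : ZMod (n - q)) from
                      cast_sub_red (by omega),
                    Gval q n c (a + (e' - q) - (n - q)) (by omega),
                    if_neg (by omega),
                    show (a + (e' - q) - (n - q) + q : ℕ) = a + q + e' - n from
                      by omega] at key
                  exact key
          have := Nat.dvd_sub hq1 (dvd_refl q)
          rwa [show (d + q) - 1 - q = d - 1 from by omega] at this

private lemma GF (q n : ℕ) (hq : 1 ≤ q) (hn : q + 1 ≤ n) (c : ZMod (n - q) → Bool)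
    (k : ZMod (n - q)) : Gmap q n (Fmap q n c) k = c k := by
  haveI : NeZero (n - q) := ⟨by omega⟩
  have hk : ((k.val : ℕ) : ZMod (n - q)) = k := ZMod.natCast_rightInverse k
  have hklt : k.val < n - q := ZMod.val_lt k
  rw [← hk, Gval q n _ k.val hklt]
  by_cases h0 : k.val = 0
  · rw [if_pos h0, show ((0 : ZMod n)) = ((0 : ℕ) : ZMod n) from by simp,
      Fval q n c 0 (by omega)]
    simp only [show ¬(1 ≤ 0 ∧ 0 ≤ q) by omega, if_false]
    rw [show (0 - q : ℕ) = 0 from by omega, h0]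
  · rw [if_neg h0, Fval q n c (k.val + q) (by omega)]
    simp only [show ¬(1 ≤ k.val + q ∧ k.val + q ≤ q) by omega, if_false]
    rw [show (k.val + q - q : ℕ) = k.val from by omega]

private lemma FG (q n : ℕ) (hq : 1 ≤ q) (hn : q + 1 ≤ n) (c : ZMod n → Bool)
    (hw : ∀ j : ℕ, 1 ≤ j → j ≤ q → c (j : ZMod n) = false) (j : ZMod n) :
    Fmap q n (Gmap q n c) j = c j := by
  haveI : NeZero n := ⟨by omega⟩
  have hj : ((j.val : ℕ) : ZMod n) = j := ZMod.natCast_rightInverse j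
  have hjlt : j.val < n := ZMod.val_lt j
  rw [← hj, Fval q n _ j.val hjlt]
  by_cases hb : 1 ≤ j.val ∧ j.val ≤ q
  · rw [if_pos hb]
    exact (hw j.val hb.1 hb.2).symm
  · rw [if_neg hb]
    rcases (by omega : j.val = 0 ∨ q + 1 ≤ j.val) with h0 | h1
    · rw [h0, show (0 - q : ℕ) = 0 from by omega, Gval q n c 0 (by omega), if_pos rfl]
      simp
    · rw [Gval q n c (j.val - q) (by omega), if_neg (by omega),
        show (j.val - q + q : ℕ) = j.val from by omega]

/-- Removing/inserting `q` consecutive white beads at positions `1,…,q` gives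
a bijection between `q`-admissible colorings of length `n - q` and those of
length `n` that are white at positions `1,…,q`. -/
theorem stmt11 (q n : ℕ) (hq : 1 ≤ q) (hn : q + 1 ≤ n) :
    Nonempty
      ({c : ZMod (n - q) → Bool // Admissible q (n - q) c} ≃
        {c : ZMod n → Bool // Admissible q n c ∧
          ∀ j : ℕ, 1 ≤ j → j ≤ q → c (j : ZMod n) = false}) := by
  exact ⟨{
    toFun := fun c => ⟨Fmap q n c.1, adm_F q n hq hn c.1 c.2, F_white q n hn c.1⟩
    invFun := fun c => ⟨Gmap q n c.1, adm_G q n hq hn c.1 c.2.1 c.2.2⟩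
    left_inv := fun c => Subtype.ext (funext fun k => GF q n hq hn c.1 k)
    right_inv := fun c => Subtype.ext (funext fun j => FG q n hq hn c.1 c.2.2 j) }⟩
end

section
/- A sequence (t_1,...,t_n) of nonnegative integers with t_1 + ... + t_n = n is a valid one-ball siteswap (i.e., the residues i + t_i mod n for i = 1,...,n are pairwise distinct — equivalently, a permutation of Z/nZ) if and only if its associated necklace coloring (position i black iff t_i > 0, with t_i equal to the cyclic distance to the next black position) is well-defined; consequently, the number of valid one-ball siteswap sequences of period n is 2^n − 1. -/
open Finset Function

namespace Stmt14Aux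

variable {n : ℕ} [NeZero n]

lemma npos : 0 < n := Nat.pos_of_ne_zero (NeZero.ne n)

/-- The necklace condition. -/
def Good (t : ZMod n → ℕ) : Prop :=
  ∀ i : ZMod n, 0 < t i →
    0 < t (i + (t i : ZMod n)) ∧
      ∀ e : ℕ, 0 < e → e < t i → t (i + (e : ZMod n)) = 0

lemma cast_val (x : ZMod n) : ((x.val : ℕ) : ZMod n) = x := ZMod.natCast_rightInverse x

lemma modeq_cases {x y : ℕ} (h : (x : ZMod n) = (y : ZMod n)) (hx : x < 2 * n)
    (hy : y < 2 * n) : x = y ∨ x + n = y ∨ y + n = x := by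
  have h' : x % n = y % n := (ZMod.natCast_eq_natCast_iff' x y n).mp h
  have hn : 0 < n := npos
  rcases le_total x y with hxy | hxy
  · obtain ⟨c, hc⟩ := (Nat.modEq_iff_dvd' hxy).mp h'
    have hc2 : c < 2 := by
      by_contra hcc
      push_neg at hcc
      have := Nat.mul_le_mul_left n hcc
      omega
    interval_cases c <;> omega
  · obtain ⟨c, hc⟩ := (Nat.modEq_iff_dvd' hxy).mp h'.symm
    have hc2 : c < 2 := by
      by_contra hcc
      push_neg at hcc
      have := Nat.mul_le_mul_left n hcc
      omega
    interval_cases c <;> omega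

lemma tle {t : ZMod n → ℕ} (ht : ∑ i, t i = n) (i : ZMod n) : t i ≤ n :=
  ht ▸ Finset.single_le_sum (f := t) (fun _ _ => Nat.zero_le _) (Finset.mem_univ i)

/-! ### Good implies bijective -/

lemma good_bij {t : ZMod n → ℕ} (ht : ∑ i, t i = n) (hg : Good t) :
    Function.Bijective (fun i : ZMod n => i + (t i : ZMod n)) := by
  rw [← Finite.injective_iff_bijective]
  intro i j hij
  simp only at hij
  by_contra hne
  rcases Nat.eq_zero_or_pos (t i) with hi0 | hi0
  · rcases Nat.eq_zero_or_pos (t j) with hj0 | hj0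
    · rw [hi0, hj0] at hij; simpa using hne (by simpa using hij)
    · rw [hi0] at hij
      simp only [Nat.cast_zero, add_zero] at hij
      have h1 := (hg j hj0).1
      rw [← hij, hi0] at h1
      omega
  · rcases Nat.eq_zero_or_pos (t j) with hj0 | hj0
    · rw [hj0] at hij
      simp only [Nat.cast_zero, add_zero] at hij
      have h1 := (hg i hi0).1
      rw [hij, hj0] at h1
      omega
    · set a := (j - i).val with ha
      have hane : a ≠ 0 := by
        simp only [ha, ne_eq, ZMod.val_eq_zero, sub_eq_zero]
        exact fun h => hne h.symm
      have han : a < n := ZMod.val_lt _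
      have hacast : (a : ZMod n) = j - i := cast_val _
      have hkey : ((t i : ℕ) : ZMod n) = ((a + t j : ℕ) : ZMod n) := by
        push_cast
        rw [hacast]
        linear_combination hij
      have hin := tle ht i
      have hjn := tle ht j
      rcases modeq_cases hkey (by omega) (by omega) with h1 | h1 | h1
      · -- t i = a + t j
        have h2 := (hg i hi0).2 a (by omega) (by omega)
        have hji : i + (a : ZMod n) = j := by rw [hacast]; ring
        rw [hji] at h2
        omega
      · -- t i + n = a + t j
        have h2 := (hg j hj0).2 (n - a) (by omega) (by omega)
        have hji : j + ((n - a : ℕ) : ZMod n) = i := by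
          push_cast [Nat.cast_sub han.le, ZMod.natCast_self]
          rw [hacast]; ring
        rw [hji] at h2
        omega
      · omega

/-! ### Bijective implies Good -/

lemma covered {t : ZMod n → ℕ} (ht : ∑ i, t i = n)
    (hb : Function.Bijective (fun i : ZMod n => i + (t i : ZMod n))) (k : ZMod n) :
    ∃ i e, 0 < e ∧ e ≤ t i ∧ i + (e : ZMod n) = k := by
  by_contra hcon
  push_neg at hcon
  have htk : t k = 0 := by
    obtain ⟨i, hi⟩ := hb.2 k
    simp only at hi
    rcases Nat.eq_zero_or_pos (t i) with h0 | h0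
    · rw [h0] at hi
      simp only [Nat.cast_zero, add_zero] at hi
      rw [← hi]; exact h0
    · exact absurd hi (hcon i (t i) h0 le_rfl)
  set p : ZMod n → ℕ := fun x => if x = k then n else (x - k).val with hp
  have key : ∀ i : ZMod n, p (i + (t i : ZMod n)) = p i + t i := by
    intro i
    rcases Nat.eq_zero_or_pos (t i) with h0 | h0
    · simp [h0]
    · have hik : i ≠ k := by
        intro h; rw [h, htk] at h0; omega
      have hval : (((i - k).val : ℕ) : ZMod n) = i - k := cast_val _
      have ha0 : (i - k).val ≠ 0 := by
        simp only [ne_eq, ZMod.val_eq_zero, sub_eq_zero]; exact hik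
      have han : (i - k).val < n := ZMod.val_lt _
      set a := (i - k).val with hadef
      have hbound : a + t i < n := by
        by_contra hge
        push_neg at hge
        refine hcon i (n - a) (by omega) (by omega) ?_
        push_cast [Nat.cast_sub han.le, ZMod.natCast_self]
        linear_combination -hval
      have h1 : i + (t i : ZMod n) ≠ k := by
        intro h
        have hz : ((a + t i : ℕ) : ZMod n) = 0 := by
          push_cast
          rw [hval]
          linear_combination h
        have h2 : ((a + t i : ℕ) : ZMod n).val = 0 := by rw [hz]; exact ZMod.val_zero
        rw [ZMod.val_cast_of_lt hbound] at h2
        omega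
      have h2 : i + (t i : ZMod n) - k = ((a + t i : ℕ) : ZMod n) := by
        push_cast; rw [hval]; ring
      simp only [hp]
      rw [if_neg hik, if_neg h1, h2, ZMod.val_cast_of_lt hbound]
  have hs : ∑ i, p (i + (t i : ZMod n)) = ∑ i, p i :=
    Fintype.sum_bijective _ hb (fun i => p (i + (t i : ZMod n))) p (fun _ => rfl)
  rw [Finset.sum_congr rfl (fun i _ => key i), Finset.sum_add_distrib, ht] at hs
  have := npos (n := n)
  omega

/-- Number of e ∈ [1, t i] with i + e = k. -/
def arcCnt (t : ZMod n → ℕ) (i k : ZMod n) : ℕ :=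
  ((Finset.Icc 1 (t i)).filter (fun e : ℕ => i + (e : ZMod n) = k)).card

lemma cov_one {t : ZMod n → ℕ} (ht : ∑ i, t i = n)
    (hb : Function.Bijective (fun i : ZMod n => i + (t i : ZMod n))) (k : ZMod n) :
    ∑ i, arcCnt t i k = 1 := by
  have harc : ∀ i : ZMod n, ∑ k, arcCnt t i k = t i := by
    intro i
    have h := Finset.card_eq_sum_card_fiberwise (f := fun e : ℕ => i + (e : ZMod n))
      (s := Finset.Icc 1 (t i)) (t := (Finset.univ : Finset (ZMod n)))
      (fun x _ => Finset.mem_univ _)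
    rw [Nat.card_Icc] at h
    simpa [arcCnt] using h.symm
  have htot : ∑ k : ZMod n, ∑ i, arcCnt t i k = ∑ k : ZMod n, 1 := by
    rw [Finset.sum_comm, Finset.sum_congr rfl (fun i _ => harc i), ht]
    simp [Finset.card_univ, ZMod.card]
  have hge : ∀ k ∈ Finset.univ, 1 ≤ ∑ i, arcCnt t i k := by
    intro k _
    obtain ⟨i, e, he1, he2, he3⟩ := covered ht hb k
    calc 1 ≤ arcCnt t i k := Finset.card_pos.mpr
          ⟨e, Finset.mem_filter.mpr ⟨Finset.mem_Icc.mpr ⟨he1, he2⟩, he3⟩⟩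
      _ ≤ ∑ i, arcCnt t i k :=
          Finset.single_le_sum (f := fun j => arcCnt t j k) (fun _ _ => Nat.zero_le _)
            (Finset.mem_univ i)
  have := (Finset.sum_eq_sum_iff_of_le hge).mp htot.symm k (Finset.mem_univ k)
  omega

lemma bij_good {t : ZMod n → ℕ} (ht : ∑ i, t i = n)
    (hb : Function.Bijective (fun i : ZMod n => i + (t i : ZMod n))) : Good t := by
  intro i hti
  have hin := tle ht i
  constructor
  · rcases lt_or_eq_of_le hin with hlt | heq
    · by_contra h0
      push_neg at h0
      have h0' : t (i + (t i : ZMod n)) = 0 := by omega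
      have heq2 : i + (t i : ZMod n) = i := by
        apply hb.1
        simp only
        rw [h0']
        push_cast
        ring
      have hz : ((t i : ℕ) : ZMod n) = 0 := by linear_combination heq2
      have : ((t i : ℕ) : ZMod n).val = 0 := by rw [hz]; exact ZMod.val_zero
      rw [ZMod.val_cast_of_lt hlt] at this
      omega
    · have hz : ((t i : ℕ) : ZMod n) = 0 := by rw [heq]; exact ZMod.natCast_self n
      rw [hz, add_zero]
      exact hti
  · intro e he1 he2
    by_contra h0
    have hj : 0 < t (i + (e : ZMod n)) := Nat.pos_of_ne_zero h0
    set k := i + (e : ZMod n) + 1 with hk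
    have hne : i ≠ i + (e : ZMod n) := by
      intro h
      have hz : ((e : ℕ) : ZMod n) = 0 := by linear_combination - h
      have : ((e : ℕ) : ZMod n).val = 0 := by rw [hz]; exact ZMod.val_zero
      rw [ZMod.val_cast_of_lt (by omega)] at this
      omega
    have h1 : 1 ≤ arcCnt t i k := by
      apply Finset.card_pos.mpr
      refine ⟨e + 1, Finset.mem_filter.mpr ⟨Finset.mem_Icc.mpr ⟨by omega, by omega⟩, ?_⟩⟩
      rw [hk]; push_cast; ring
    have h2 : 1 ≤ arcCnt t (i + (e : ZMod n)) k := by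
      apply Finset.card_pos.mpr
      refine ⟨1, Finset.mem_filter.mpr ⟨Finset.mem_Icc.mpr ⟨le_rfl, hj⟩, ?_⟩⟩
      rw [hk]; push_cast; ring
    have hsub := Finset.sum_le_sum_of_subset
      (Finset.subset_univ ({i, i + (e : ZMod n)} : Finset (ZMod n)))
      (f := fun i' => arcCnt t i' k)
    rw [Finset.sum_pair hne] at hsub
    have hsub' : arcCnt t i k + arcCnt t (i + (e : ZMod n)) k ≤ ∑ x, arcCnt t x k := hsub
    have := cov_one ht hb k
    omega

/-! ### The necklace bijection -/

lemma exGap (S : Finset (ZMod n)) (hS : S.Nonempty) (i : ZMod n) :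
    ∃ e : ℕ, 0 < e ∧ i + (e : ZMod n) ∈ S := by
  obtain ⟨s, hs⟩ := hS
  refine ⟨(s - i).val + n, by have := npos (n := n); omega, ?_⟩
  have : i + (((s - i).val + n : ℕ) : ZMod n) = s := by
    push_cast [cast_val, ZMod.natCast_self]
    ring
  rw [this]; exact hs

/-- Cyclic gap from `i` to the next element of `S`. -/
def gap (S : Finset (ZMod n)) (hS : S.Nonempty) (i : ZMod n) : ℕ :=
  Nat.find (exGap S hS i)

lemma gap_pos (S : Finset (ZMod n)) (hS : S.Nonempty) (i : ZMod n) : 0 < gap S hS i :=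
  (Nat.find_spec (exGap S hS i)).1

lemma gap_mem (S : Finset (ZMod n)) (hS : S.Nonempty) (i : ZMod n) :
    i + ((gap S hS i : ℕ) : ZMod n) ∈ S :=
  (Nat.find_spec (exGap S hS i)).2

lemma gap_min (S : Finset (ZMod n)) (hS : S.Nonempty) (i : ZMod n) {e : ℕ}
    (h : e < gap S hS i) (he : 0 < e) : i + (e : ZMod n) ∉ S :=
  fun hmem => Nat.find_min (exGap S hS i) h ⟨he, hmem⟩

lemma gap_le (S : Finset (ZMod n)) (hS : S.Nonempty) {i : ZMod n} (hi : i ∈ S) :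
    gap S hS i ≤ n :=
  Nat.find_le ⟨npos, by rw [ZMod.natCast_self, add_zero]; exact hi⟩

lemma exPrev (S : Finset (ZMod n)) (hS : S.Nonempty) (k : ZMod n) :
    ∃ m : ℕ, 0 < m ∧ k - (m : ZMod n) ∈ S := by
  obtain ⟨s, hs⟩ := hS
  refine ⟨(k - s).val + n, by have := npos (n := n); omega, ?_⟩
  have : k - (((k - s).val + n : ℕ) : ZMod n) = s := by
    push_cast [cast_val, ZMod.natCast_self]
    ring
  rw [this]; exact hs

/-- Cyclic gap from `k` back to the previous element of `S`. -/
def prev (S : Finset (ZMod n)) (hS : S.Nonempty) (k : ZMod n) : ℕ :=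
  Nat.find (exPrev S hS k)

lemma prev_pos (S : Finset (ZMod n)) (hS : S.Nonempty) (k : ZMod n) : 0 < prev S hS k :=
  (Nat.find_spec (exPrev S hS k)).1

lemma prev_mem (S : Finset (ZMod n)) (hS : S.Nonempty) (k : ZMod n) :
    k - ((prev S hS k : ℕ) : ZMod n) ∈ S :=
  (Nat.find_spec (exPrev S hS k)).2

lemma prev_min (S : Finset (ZMod n)) (hS : S.Nonempty) (k : ZMod n) {m : ℕ}
    (h : m < prev S hS k) (hm : 0 < m) : k - (m : ZMod n) ∉ S :=
  fun hmem => Nat.find_min (exPrev S hS k) h ⟨hm, hmem⟩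

lemma fiber_eq (S : Finset (ZMod n)) (hS : S.Nonempty) {i : ZMod n} (hi : i ∈ S) :
    Finset.univ.filter (fun k => k - ((prev S hS k : ℕ) : ZMod n) = i) =
      (Finset.Icc 1 (gap S hS i)).image (fun e : ℕ => i + (e : ZMod n)) := by
  ext k
  simp only [Finset.mem_filter, Finset.mem_univ, true_and, Finset.mem_image, Finset.mem_Icc]
  constructor
  · intro hk
    refine ⟨prev S hS k, ⟨prev_pos S hS k, ?_⟩, ?_⟩
    · by_contra hlt
      push_neg at hlt
      have hprev := prev_pos S hS k
      have hgp := gap_pos S hS i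
      have h1 : k - ((prev S hS k - gap S hS i : ℕ) : ZMod n) =
          i + ((gap S hS i : ℕ) : ZMod n) := by
        push_cast [Nat.cast_sub hlt.le]
        linear_combination hk
      exact prev_min S hS k (by omega) (by omega) (h1 ▸ gap_mem S hS i)
    · rw [← hk]; ring
  · rintro ⟨e, ⟨he1, he2⟩, rfl⟩
    have hme : prev S hS (i + (e : ZMod n)) = e := by
      have hub : prev S hS (i + (e : ZMod n)) ≤ e := by
        apply Nat.find_le
        refine ⟨he1, ?_⟩
        have : i + (e : ZMod n) - (e : ZMod n) = i := by ring
        rw [this]; exact hi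
      rcases lt_or_eq_of_le hub with hlt | hE
      · exfalso
        have h2 := prev_mem S hS (i + (e : ZMod n))
        have hp := prev_pos S hS (i + (e : ZMod n))
        have h3 : i + (e : ZMod n) - ((prev S hS (i + (e : ZMod n)) : ℕ) : ZMod n) =
            i + ((e - prev S hS (i + (e : ZMod n)) : ℕ) : ZMod n) := by
          push_cast [Nat.cast_sub hlt.le]
          ring
        rw [h3] at h2
        exact gap_min S hS i (by omega) (by omega) h2
      · exact hE
    rw [hme]; ring

lemma sum_gap (S : Finset (ZMod n)) (hS : S.Nonempty) : ∑ i ∈ S, gap S hS i = n := by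
  have hmaps : ∀ k ∈ (Finset.univ : Finset (ZMod n)),
      k - ((prev S hS k : ℕ) : ZMod n) ∈ S := fun k _ => prev_mem S hS k
  have h1 := Finset.card_eq_sum_card_fiberwise hmaps
  rw [Finset.card_univ, ZMod.card] at h1
  have h2 : ∀ i ∈ S,
      (Finset.univ.filter (fun k => k - ((prev S hS k : ℕ) : ZMod n) = i)).card
        = gap S hS i := by
    intro i hi
    rw [fiber_eq S hS hi, Finset.card_image_of_injOn, Nat.card_Icc]
    · omega
    · intro e he e' he' heq
      simp only [Finset.coe_Icc, Set.mem_Icc] at he he'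
      have hcast : ((e : ℕ) : ZMod n) = ((e' : ℕ) : ZMod n) := by
        have := heq
        simp only at this
        linear_combination this
      have hgl := gap_le S hS hi
      rcases modeq_cases hcast (by omega) (by omega) with h | h | h <;> omega
  rw [Finset.sum_congr rfl h2] at h1
  exact h1.symm

/-- The throw sequence associated to a nonempty set of black positions. -/
def tOf (S : Finset (ZMod n)) (hS : S.Nonempty) : ZMod n → ℕ :=
  fun i => if i ∈ S then gap S hS i else 0

lemma sum_tOf (S : Finset (ZMod n)) (hS : S.Nonempty) : ∑ i, tOf S hS i = n := by
  rw [show (fun i => tOf S hS i) = tOf S hS from rfl]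
  unfold tOf
  rw [Finset.sum_ite_mem, Finset.univ_inter]
  exact sum_gap S hS

lemma good_tOf (S : Finset (ZMod n)) (hS : S.Nonempty) : Good (tOf S hS) := by
  intro i hpos
  have hi : i ∈ S := by
    by_contra h
    simp [tOf, h] at hpos
  have hti : tOf S hS i = gap S hS i := if_pos hi
  constructor
  · rw [hti]
    have hmem := gap_mem S hS i
    rw [show tOf S hS (i + ((gap S hS i : ℕ) : ZMod n)) =
        gap S hS (i + ((gap S hS i : ℕ) : ZMod n)) from if_pos hmem]
    exact gap_pos S hS _
  · intro e he1 he2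
    rw [hti] at he2
    have := gap_min S hS i he2 he1
    simp [tOf, this]

lemma support_tOf (S : Finset (ZMod n)) (hS : S.Nonempty) (i : ZMod n) :
    0 < tOf S hS i ↔ i ∈ S := by
  by_cases h : i ∈ S <;> simp [tOf, h, gap_pos]

lemma support_nonempty {t : ZMod n → ℕ} (ht : ∑ i, t i = n) :
    (Finset.univ.filter (fun i => 0 < t i)).Nonempty := by
  by_contra h
  rw [Finset.not_nonempty_iff_eq_empty, Finset.filter_eq_empty_iff] at h
  have : ∑ i, t i = 0 := Finset.sum_eq_zero (fun i _ => by have := h (Finset.mem_univ i); omega)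
  have := npos (n := n)
  omega

lemma tOf_support {t : ZMod n → ℕ} (ht : ∑ i, t i = n) (hg : Good t)
    (hS : (Finset.univ.filter (fun i => 0 < t i)).Nonempty) :
    tOf _ hS = t := by
  set S := Finset.univ.filter (fun i => 0 < t i) with hSdef
  have hmemiff : ∀ j : ZMod n, j ∈ S ↔ 0 < t j := by
    intro j; simp [hSdef]
  funext i
  by_cases hi : 0 < t i
  · have hiS : i ∈ S := (hmemiff i).mpr hi
    rw [show tOf S hS i = gap S hS i from if_pos hiS]
    have hub : gap S hS i ≤ t i :=
      Nat.find_le ⟨hi, (hmemiff _).mpr (hg i hi).1⟩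
    rcases lt_or_eq_of_le hub with hlt | hE
    · exfalso
      have h1 : 0 < t (i + ((gap S hS i : ℕ) : ZMod n)) :=
        (hmemiff _).mp (gap_mem S hS i)
      have h2 := (hg i hi).2 (gap S hS i) (gap_pos S hS i) hlt
      omega
    · exact hE
  · have hiS : i ∉ S := fun h => hi ((hmemiff i).mp h)
    rw [show tOf S hS i = 0 from if_neg hiS]
    omega

/-- The bijection between good sequences and nonempty subsets. -/
noncomputable def necklaceEquiv :
    {t : ZMod n → ℕ // (∑ i, t i) = n ∧ Good t} ≃ {S : Finset (ZMod n) // S.Nonempty} where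
  toFun p := ⟨Finset.univ.filter (fun i => 0 < p.1 i), support_nonempty p.2.1⟩
  invFun q := ⟨tOf q.1 q.2, sum_tOf q.1 q.2, good_tOf q.1 q.2⟩
  left_inv p := Subtype.ext (tOf_support p.2.1 p.2.2 _)
  right_inv q := Subtype.ext (by
    ext i
    simp [support_tOf])

lemma card_nonempty_finsets :
    Nat.card {S : Finset (ZMod n) // S.Nonempty} = 2 ^ n - 1 := by
  rw [Nat.card_eq_fintype_card]
  rw [Fintype.card_congr (Equiv.subtypeEquivRight
    (fun S : Finset (ZMod n) => Finset.nonempty_iff_ne_empty))]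
  have h := Fintype.card_subtype_compl (fun S : Finset (ZMod n) => S = ∅)
  rw [Fintype.card_finset, ZMod.card, Fintype.card_subtype_eq] at h
  exact h

end Stmt14Aux

/-- A sequence summing to `n` is a valid one-ball siteswap iff every nonzero
throw lands exactly on the next black position (with only empty hands in
between); consequently there are `2 ^ n - 1` one-ball siteswaps of period
`n`. -/
theorem stmt14 (n : ℕ) [NeZero n] :
    (∀ t : ZMod n → ℕ, (∑ i, t i) = n →
      (Function.Bijective (fun i : ZMod n => i + (t i : ZMod n)) ↔
        ∀ i : ZMod n, 0 < t i →
          0 < t (i + (t i : ZMod n)) ∧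
            ∀ e : ℕ, 0 < e → e < t i → t (i + (e : ZMod n)) = 0)) ∧
    Nat.card {t : ZMod n → ℕ // (∑ i, t i) = n ∧
        Function.Bijective (fun i : ZMod n => i + (t i : ZMod n))} =
      2 ^ n - 1 := by
  constructor
  · intro t ht
    exact ⟨fun hb => Stmt14Aux.bij_good ht hb, fun hg => Stmt14Aux.good_bij ht hg⟩
  · have e1 : {t : ZMod n → ℕ // (∑ i, t i) = n ∧
        Function.Bijective (fun i : ZMod n => i + (t i : ZMod n))} ≃
        {S : Finset (ZMod n) // S.Nonempty} :=
      (Equiv.subtypeEquivRight (fun t => and_congr_right fun ht =>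
        ⟨Stmt14Aux.bij_good ht, Stmt14Aux.good_bij ht⟩)).trans Stmt14Aux.necklaceEquiv
    rw [Nat.card_congr e1, Stmt14Aux.card_nonempty_finsets]
end

section
/- For n ≥ 1, the number of 2-admissible colorings of a cycle of length n (at least one black bead; an even number of white beads between any two cyclically consecutive black beads) equals the number of tilings of a cycle of length n by curved squares (covering one position) and curved dominoes (covering two adjacent positions) when n is odd, and equals that number minus 2 when n is even; in particular for odd n this count equals the Lucas number L(n). -/
open Finset


open Finset

def pSets (a m : ℕ) : Finset (Finset ℕ) :=
  (Finset.Ico a (a+m)).powerset.filter (fun S => ∀ i ∈ S, i + 1 ∉ S)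

lemma mem_pSets {a m : ℕ} {S : Finset ℕ} :
    S ∈ pSets a m ↔ S ⊆ Finset.Ico a (a+m) ∧ ∀ i ∈ S, i + 1 ∉ S := by
  simp [pSets]

lemma pSets_zero (a : ℕ) : (pSets a 0).card = 1 := by
  simp [pSets, Finset.filter_singleton]

lemma pSets_one (a : ℕ) : (pSets a 1).card = 2 := by
  have h : pSets a 1 = {∅, {a}} := by
    ext S
    rw [mem_pSets]
    constructor
    · rintro ⟨hs, -⟩
      have h2 : S ⊆ {a} := by simpa using hs
      rcases Finset.subset_singleton_iff.mp h2 with h | h <;> simp [h]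
    · intro h
      rcases Finset.mem_insert.mp h with rfl | h
      · simp
      · rw [Finset.mem_singleton] at h
        subst h
        refine ⟨by simp, ?_⟩
        intro i hi
        rw [Finset.mem_singleton] at hi
        subst hi
        simp
  rw [h, Finset.card_insert_of_notMem (by simp only [Finset.mem_singleton]; exact (Finset.singleton_ne_empty a).symm), Finset.card_singleton]

lemma pSets_rec (a m : ℕ) :
    (pSets a (m+2)).card = (pSets a (m+1)).card + (pSets a m).card := by
  classical
  rw [← Finset.card_filter_add_card_filter_not
    (s := pSets a (m+2)) (p := fun S => a+m+1 ∈ S)]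
  rw [Nat.add_comm]
  congr 1
  · -- without top element = pSets a (m+1)
    congr 1
    ext S
    rw [Finset.mem_filter, mem_pSets, mem_pSets]
    constructor
    · rintro ⟨⟨hsub, hadj⟩, htop⟩
      refine ⟨?_, hadj⟩
      intro x hx
      have h1 := hsub hx
      rw [Finset.mem_Ico] at h1 ⊢
      have h2 : x ≠ a + m + 1 := by rintro rfl; exact htop hx
      omega
    · rintro ⟨hsub, hadj⟩
      refine ⟨⟨fun x hx => ?_, hadj⟩, fun h => ?_⟩
      · have h1 := hsub hx; rw [Finset.mem_Ico] at h1 ⊢; omega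
      · have h1 := hsub h; rw [Finset.mem_Ico] at h1; omega
  · -- with top element ↔ pSets a m
    apply Finset.card_nbij' (fun S => S.erase (a+m+1)) (fun T => insert (a+m+1) T)
    · intro S hS
      simp only [Finset.mem_coe] at hS ⊢
      rw [Finset.mem_filter, mem_pSets] at hS
      obtain ⟨⟨hsub, hadj⟩, htop⟩ := hS
      rw [mem_pSets]
      constructor
      · intro x hx
        rw [Finset.mem_erase] at hx
        have hx1 := hsub hx.2
        rw [Finset.mem_Ico] at hx1 ⊢
        have hxm : x ≠ a + m := by
          rintro rfl
          exact hadj _ hx.2 htop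
        omega
      · intro i hi
        rw [Finset.mem_erase] at hi
        intro h
        exact hadj i hi.2 (Finset.mem_of_mem_erase h)
    · intro T hT
      simp only [Finset.mem_coe] at hT ⊢
      rw [mem_pSets] at hT
      rw [Finset.mem_filter, mem_pSets]
      obtain ⟨hsub, hadj⟩ := hT
      refine ⟨⟨?_, ?_⟩, by simp⟩
      · intro x hx
        rw [Finset.mem_insert] at hx
        rcases hx with rfl | hx
        · rw [Finset.mem_Ico]; omega
        · have h1 := hsub hx; rw [Finset.mem_Ico] at h1 ⊢; omega
      · intro i hi
        rw [Finset.mem_insert] at hi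
        rcases hi with rfl | hi
        · intro h
          rcases Finset.mem_insert.mp h with h | h
          · omega
          · have h1 := hsub h; rw [Finset.mem_Ico] at h1; omega
        · intro h
          rcases Finset.mem_insert.mp h with h | h
          · have h1 := hsub hi; rw [Finset.mem_Ico] at h1; omega
          · exact hadj i hi h
    · intro S hS
      rw [Finset.mem_coe] at hS
      rw [Finset.mem_filter] at hS
      exact Finset.insert_erase hS.2
    · intro T hT
      rw [Finset.mem_coe] at hT
      rw [mem_pSets] at hT
      apply Finset.erase_insert
      intro h
      have h1 := hT.1 h; rw [Finset.mem_Ico] at h1; omega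


lemma lucas_pSets (L : ℕ → ℕ) (hL0 : L 0 = 2) (hL1 : L 1 = 1)
    (hLrec : ∀ n : ℕ, L (n + 2) = L (n + 1) + L n) :
    ∀ k, L (k+3) = (pSets 1 (k+2)).card + (pSets 2 k).card := by
  have key : ∀ k, L (k+3) = (pSets 1 (k+2)).card + (pSets 2 k).card ∧
      L (k+4) = (pSets 1 (k+3)).card + (pSets 2 (k+1)).card := by
    intro k
    induction k with
    | zero =>
      have h2 : L 2 = 3 := by rw [hLrec 0, hL0, hL1]
      have h3 : L 3 = 4 := by rw [hLrec 1, h2, hL1]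
      have h4 : L 4 = 7 := by rw [hLrec 2, h2, h3]
      constructor
      · rw [h3, pSets_rec, pSets_zero, pSets_one, pSets_zero]
      · rw [h4, pSets_rec, pSets_rec, pSets_zero, pSets_one, pSets_one]
    | succ k ih =>
      refine ⟨ih.2, ?_⟩
      have : L (k+5) = L (k+4) + L (k+3) := hLrec (k+3)
      rw [this, ih.1, ih.2, pSets_rec 1 (k+2), pSets_rec 2 k]
      ring
  exact fun k => (key k).1

section Cyc
variable (n : ℕ) [NeZero n]

def cycSets : Finset (Finset (ZMod n)) :=
  Finset.univ.filter (fun D => ∀ d ∈ D, d + 1 ∉ D)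

lemma mem_cycSets {D : Finset (ZMod n)} :
    D ∈ cycSets n ↔ ∀ d ∈ D, d + 1 ∉ D := by simp [cycSets]

end Cyc

lemma val_cast_eq {n : ℕ} [NeZero n] (d : ZMod n) : ((d.val : ℕ) : ZMod n) = d :=
  ZMod.natCast_rightInverse d

lemma cycSets_card (n : ℕ) (hn : 3 ≤ n) :
    haveI : NeZero n := ⟨by omega⟩
    (cycSets n).card = (pSets 1 (n-1)).card + (pSets 2 (n-3)).card := by
  haveI : NeZero n := ⟨by omega⟩
  haveI : Fact (1 < n) := ⟨by omega⟩
  classical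
  rw [← Finset.card_filter_add_card_filter_not
    (s := cycSets n) (p := fun D => (0 : ZMod n) ∈ D)]
  rw [Nat.add_comm]
  congr 1
  · -- 0 ∉ D : bijection with pSets 1 (n-1)
    apply Finset.card_nbij' (fun D => D.image ZMod.val)
      (fun V => V.image (Nat.cast : ℕ → ZMod n))
    · intro D hD
      simp only [Finset.mem_coe] at hD ⊢
      rw [Finset.mem_filter, mem_cycSets] at hD
      obtain ⟨hadj, h0⟩ := hD
      rw [mem_pSets]
      constructor
      · intro v hv
        rw [Finset.mem_image] at hv
        obtain ⟨d, hd, rfl⟩ := hv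
        rw [Finset.mem_Ico]
        have h1 : d.val < n := ZMod.val_lt d
        have h2 : d.val ≠ 0 := by
          intro h
          have : d = 0 := by rw [← val_cast_eq d, h]; simp
          exact h0 (this ▸ hd)
        omega
      · intro v hv hv1
        rw [Finset.mem_image] at hv hv1
        obtain ⟨d, hd, rfl⟩ := hv
        obtain ⟨d', hd', he⟩ := hv1
        have : d' = d + 1 := by
          rw [← val_cast_eq d', he]
          push_cast
          rw [val_cast_eq]
        exact hadj d hd (this ▸ hd')
    · intro V hV
      simp only [Finset.mem_coe] at hV ⊢
      rw [mem_pSets] at hV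
      obtain ⟨hsub, hadj⟩ := hV
      rw [Finset.mem_filter, mem_cycSets]
      have hmem : ∀ v ∈ V, 1 ≤ v ∧ v < n := by
        intro v hv
        have := hsub hv
        rw [Finset.mem_Ico] at this
        omega
      constructor
      · intro d hd
        rw [Finset.mem_image] at hd
        obtain ⟨v, hv, rfl⟩ := hd
        intro hc
        rw [Finset.mem_image] at hc
        obtain ⟨v', hv', he⟩ := hc
        obtain ⟨hv1, hv2⟩ := hmem v hv
        obtain ⟨hv1', hv2'⟩ := hmem v' hv'
        have he' : ((v' : ℕ) : ZMod n) = ((v + 1 : ℕ) : ZMod n) := by push_cast; push_cast at he; linear_combination he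
        have : v' = v + 1 ∨ v + 1 = n := by
          have h1 := ZMod.val_cast_of_lt hv2'
          rcases Nat.lt_or_ge (v+1) n with h | h
          · left
            have h2 := ZMod.val_cast_of_lt h
            rw [he'] at h1
            omega
          · right; omega
        rcases this with h | h
        · exact hadj v hv (h ▸ hv')
        · -- v + 1 = n : then cast (v+1) = 0, so v' ≡ 0 contra
          rw [h] at he'
          rw [ZMod.natCast_self] at he'
          have := ZMod.val_cast_of_lt hv2'
          rw [he'] at this
          simp at this
          omega
      · intro hc
        rw [Finset.mem_image] at hc
        obtain ⟨v, hv, he⟩ := hc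
        obtain ⟨hv1, hv2⟩ := hmem v hv
        have := ZMod.val_cast_of_lt hv2
        rw [he] at this
        simp at this
        omega
    · intro D hD
      rw [Finset.mem_coe] at hD; beta_reduce
      rw [Finset.image_image]
      have : ∀ d ∈ D, (Nat.cast ∘ ZMod.val) d = id d := fun d _ => val_cast_eq d
      rw [Finset.image_congr this, Finset.image_id]
    · intro V hV
      rw [Finset.mem_coe] at hV; beta_reduce
      rw [mem_pSets] at hV
      rw [Finset.image_image]
      have : ∀ v ∈ V, (ZMod.val ∘ (Nat.cast : ℕ → ZMod n)) v = id v := by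
        intro v hv
        have := hV.1 hv
        rw [Finset.mem_Ico] at this
        exact ZMod.val_cast_of_lt (by omega)
      rw [Finset.image_congr this, Finset.image_id]
  · -- 0 ∈ D : bijection with pSets 2 (n-3)
    apply Finset.card_nbij' (fun D => (D.erase 0).image ZMod.val)
      (fun V => insert (0 : ZMod n) (V.image (Nat.cast : ℕ → ZMod n)))
    · intro D hD
      simp only [Finset.mem_coe] at hD ⊢
      rw [Finset.mem_filter, mem_cycSets] at hD
      obtain ⟨hadj, h0⟩ := hD
      rw [mem_pSets]
      have h1 : (1 : ZMod n) ∉ D := by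
        have := hadj 0 h0
        simpa using this
      constructor
      · intro v hv
        rw [Finset.mem_image] at hv
        obtain ⟨d, hd, rfl⟩ := hv
        rw [Finset.mem_erase] at hd
        rw [Finset.mem_Ico]
        have hlt : d.val < n := ZMod.val_lt d
        have h2 : d.val ≠ 0 := by
          intro h
          exact hd.1 (by rw [← val_cast_eq d, h]; simp)
        have h3 : d.val ≠ 1 := by
          intro h
          have : d = 1 := by rw [← val_cast_eq d, h]; simp
          exact h1 (this ▸ hd.2)
        have h4 : d.val ≠ n - 1 := by
          intro h
          have hd1 : d + 1 = 0 := by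
            rw [← val_cast_eq d, h]
            push_cast
            rw [← Nat.cast_one (R := ZMod n), ← Nat.cast_add, (by omega : n - 1 + 1 = n), ZMod.natCast_self]
          exact hadj d hd.2 (hd1 ▸ h0)
        omega
      · intro v hv hv1
        rw [Finset.mem_image] at hv hv1
        obtain ⟨d, hd, rfl⟩ := hv
        obtain ⟨d', hd', he⟩ := hv1
        have : d' = d + 1 := by
          rw [← val_cast_eq d', he]
          push_cast
          rw [val_cast_eq]
        exact hadj d (Finset.mem_of_mem_erase hd) (this ▸ Finset.mem_of_mem_erase hd')
    · intro V hV
      simp only [Finset.mem_coe] at hV ⊢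
      rw [mem_pSets] at hV
      obtain ⟨hsub, hadj⟩ := hV
      have hmem : ∀ v ∈ V, 2 ≤ v ∧ v < n - 1 := by
        intro v hv
        have := hsub hv
        rw [Finset.mem_Ico] at this
        omega
      have hnotin : (0 : ZMod n) ∉ V.image (Nat.cast : ℕ → ZMod n) := by
        intro hc
        rw [Finset.mem_image] at hc
        obtain ⟨v, hv, he⟩ := hc
        obtain ⟨hv1, hv2⟩ := hmem v hv
        have := ZMod.val_cast_of_lt (show v < n by omega)
        rw [he] at this
        simp at this
        omega
      rw [Finset.mem_filter, mem_cycSets]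
      refine ⟨?_, by simp⟩
      intro d hd
      rcases Finset.mem_insert.mp hd with rfl | hd
      · -- d = 0 : 1 ∉ insert
        intro hc
        rw [zero_add] at hc
        rcases Finset.mem_insert.mp hc with h | h
        · have : (1 : ZMod n).val = 1 := ZMod.val_one _
          rw [h] at this
          simp at this
        · rw [Finset.mem_image] at h
          obtain ⟨v, hv, he⟩ := h
          obtain ⟨hv1, hv2⟩ := hmem v hv
          have := ZMod.val_cast_of_lt (show v < n by omega)
          rw [he, ZMod.val_one _] at this
          omega
      · rw [Finset.mem_image] at hd
        obtain ⟨v, hv, rfl⟩ := hd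
        obtain ⟨hv1, hv2⟩ := hmem v hv
        intro hc
        have hcast : ((v : ℕ) : ZMod n) + 1 = ((v + 1 : ℕ) : ZMod n) := by push_cast; ring
        rw [hcast] at hc
        rcases Finset.mem_insert.mp hc with h | h
        · have := ZMod.val_cast_of_lt (show v + 1 < n by omega)
          rw [h] at this
          simp at this
        · rw [Finset.mem_image] at h
          obtain ⟨v', hv', he⟩ := h
          obtain ⟨hv1', hv2'⟩ := hmem v' hv'
          have e1 := ZMod.val_cast_of_lt (show v' < n by omega)
          have e2 := ZMod.val_cast_of_lt (show v + 1 < n by omega)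
          rw [he] at e1
          have : v' = v + 1 := by omega
          exact hadj v hv (this ▸ hv')
    · intro D hD
      rw [Finset.mem_coe] at hD; beta_reduce
      rw [Finset.mem_filter] at hD
      rw [Finset.image_image]
      have : ∀ d ∈ D.erase 0, (Nat.cast ∘ ZMod.val) d = id d := fun d _ => val_cast_eq d
      rw [Finset.image_congr this, Finset.image_id, Finset.insert_erase hD.2]
    · intro V hV
      rw [Finset.mem_coe] at hV; beta_reduce
      rw [mem_pSets] at hV
      have hmem : ∀ v ∈ V, 2 ≤ v ∧ v < n - 1 := by
        intro v hv
        have := hV.1 hv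
        rw [Finset.mem_Ico] at this
        omega
      have hnotin : (0 : ZMod n) ∉ V.image (Nat.cast : ℕ → ZMod n) := by
        intro hc
        rw [Finset.mem_image] at hc
        obtain ⟨v, hv, he⟩ := hc
        obtain ⟨hv1, hv2⟩ := hmem v hv
        have := ZMod.val_cast_of_lt (show v < n by omega)
        rw [he] at this
        simp at this
        omega
      rw [Finset.erase_insert hnotin, Finset.image_image]
      have : ∀ v ∈ V, (ZMod.val ∘ (Nat.cast : ℕ → ZMod n)) v = id v := by
        intro v hv
        obtain ⟨hv1, hv2⟩ := hmem v hv
        exact ZMod.val_cast_of_lt (by omega)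
      rw [Finset.image_congr this, Finset.image_id]



section Col
variable {n : ℕ} [NeZero n]

def Phi (D : Finset (ZMod n)) : ZMod n → Bool := fun i => decide (i ∉ D ∧ i - 1 ∉ D)

lemma Phi_true {D : Finset (ZMod n)} {i : ZMod n} :
    Phi D i = true ↔ i ∉ D ∧ i - 1 ∉ D := by simp [Phi]

lemma Phi_false {D : Finset (ZMod n)} {i : ZMod n} :
    Phi D i = false ↔ i ∈ D ∨ i - 1 ∈ D := by
  simp [Phi]; tauto

lemma cast_sub_helper (p : ZMod n) (k j : ℕ) (hj : j ≤ k) :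
    p - (k : ZMod n) + (j : ZMod n) = p - ((k - j : ℕ) : ZMod n) := by
  rw [Nat.cast_sub hj]; ring

lemma run {D : Finset (ZMod n)} (hadj : ∀ d ∈ D, d + 1 ∉ D) (i : ZMod n)
    (hi : Phi D i = true) (e : ℕ)
    (hw : ∀ j : ℕ, 0 < j → j ≤ e → Phi D (i + (j : ZMod n)) = false) :
    ∀ j : ℕ, 0 < j → j ≤ e → (i + (j : ZMod n) ∈ D ↔ Odd j) := by
  intro j
  induction j using Nat.strong_induction_on with
  | _ j IH =>
    intro hj0 hje
    rcases Nat.lt_or_ge j 2 with h2 | h2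
    · have hj1 : j = 1 := by omega
      subst hj1
      have hf := Phi_false.mp (hw 1 one_pos hje)
      have hsub : i + ((1 : ℕ) : ZMod n) - 1 = i := by push_cast; ring
      rw [hsub] at hf
      have hiD : i ∉ D := (Phi_true.mp hi).1
      rcases hf with h | h
      · exact iff_of_true h odd_one
      · exact absurd h hiD
    · have hIH := IH (j-1) (by omega) (by omega) (by omega)
      have hc1 : i + ((j - 1 : ℕ) : ZMod n) = i + (j : ZMod n) - 1 := by
        rw [Nat.cast_sub (by omega : 1 ≤ j)]; ring
      rcases Nat.even_or_odd j with hev | hod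
      · -- j even, j-1 odd, so i+(j-1) ∈ D, so i+j ∉ D
        have hmem : i + ((j-1 : ℕ) : ZMod n) ∈ D :=
          hIH.mpr (by rw [Nat.odd_iff]; rw [Nat.even_iff] at hev; omega)
        have hnot : i + ((j-1 : ℕ) : ZMod n) + 1 ∉ D := hadj _ hmem
        have : i + ((j-1 : ℕ) : ZMod n) + 1 = i + (j : ZMod n) := by
          rw [hc1]; ring
        rw [this] at hnot
        exact iff_of_false hnot (by simp [Nat.odd_iff, Nat.even_iff] at hev ⊢; omega)
      · -- j odd, j-1 even, so i+(j-1) ∉ D, so i+j ∈ D (covered)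
        have hnot : i + ((j-1 : ℕ) : ZMod n) ∉ D := by
          intro h
          have h1 := hIH.mp h
          rw [Nat.odd_iff] at h1 hod
          omega
        have hf := Phi_false.mp (hw j hj0 hje)
        rw [← hc1] at hf
        rcases hf with h | h
        · exact iff_of_true h hod
        · exact absurd h hnot
end Col

section Gap
variable {n : ℕ} [NeZero n]

noncomputable def gap (c : ZMod n → Bool) (p : ZMod n) : ℕ :=
  sInf {k : ℕ | 0 < k ∧ c (p - (k : ZMod n)) = true}

lemma gap_nonempty {c : ZMod n → Bool} (hc : ∃ i, c i = true) (p : ZMod n) :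
    {k : ℕ | 0 < k ∧ c (p - (k : ZMod n)) = true}.Nonempty := by
  obtain ⟨i0, hi0⟩ := hc
  refine ⟨(p - i0).val + n, ?_, ?_⟩
  · have := Nat.pos_of_ne_zero (NeZero.ne n); omega
  · have : (((p - i0).val + n : ℕ) : ZMod n) = p - i0 := by
      push_cast
      rw [ZMod.natCast_self, add_zero, ZMod.natCast_rightInverse (p - i0)]
    rw [this]
    simpa using hi0

lemma gap_pos {c : ZMod n → Bool} (hc : ∃ i, c i = true) (p : ZMod n) :
    0 < gap c p := (Nat.sInf_mem (gap_nonempty hc p)).1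

lemma gap_black {c : ZMod n → Bool} (hc : ∃ i, c i = true) (p : ZMod n) :
    c (p - ((gap c p : ℕ) : ZMod n)) = true := (Nat.sInf_mem (gap_nonempty hc p)).2

lemma gap_min {c : ZMod n → Bool} (p : ZMod n) {j : ℕ} (hj : 0 < j)
    (hlt : j < gap c p) : c (p - (j : ZMod n)) = false := by
  have := Nat.notMem_of_lt_sInf (hlt : j < sInf _)
  simp only [Set.mem_setOf_eq, not_and] at this
  rcases Bool.eq_false_or_eq_true (c (p - (j : ZMod n))) with h | h
  · exact absurd h (this hj)
  · exact h

lemma gap_step {c : ZMod n → Bool} (hc : ∃ i, c i = true) (p : ZMod n)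
    (hp : c (p - 1) = false) : gap c p = gap c (p - 1) + 1 := by
  set m := gap c (p - 1) with hm
  apply le_antisymm
  · apply Nat.sInf_le
    refine ⟨by omega, ?_⟩
    have : (((m + 1 : ℕ)) : ZMod n) = (m : ZMod n) + 1 := by push_cast; ring
    rw [this, show p - ((m : ZMod n) + 1) = (p - 1) - (m : ZMod n) by ring]
    exact gap_black hc (p - 1)
  · set g := gap c p with hg
    have hg0 : 0 < g := gap_pos hc p
    have hgb : c (p - ((g : ℕ) : ZMod n)) = true := gap_black hc p
    have hg1 : g ≠ 1 := by
      intro h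
      rw [h] at hgb
      simp only [Nat.cast_one] at hgb
      rw [hgb] at hp
      exact absurd hp (by simp)
    have hg2 : 2 ≤ g := by omega
    have : m ≤ g - 1 := by
      apply Nat.sInf_le
      refine ⟨by omega, ?_⟩
      rw [show (p - 1) - ((g - 1 : ℕ) : ZMod n) = p - ((g : ℕ) : ZMod n) by
        rw [Nat.cast_sub (by omega : 1 ≤ g)]; push_cast; ring]
      exact hgb
    omega

noncomputable def Psi (c : ZMod n → Bool) : Finset (ZMod n) :=
  Finset.univ.filter (fun p => c p = false ∧ Odd (gap c p))

lemma mem_Psi {c : ZMod n → Bool} {p : ZMod n} :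
    p ∈ Psi c ↔ c p = false ∧ Odd (gap c p) := by simp [Psi]

end Gap

section Main
variable {n : ℕ} [NeZero n]

lemma phi_admissible {D : Finset (ZMod n)} (hadj : ∀ d ∈ D, d + 1 ∉ D)
    (hsq : ∃ i, Phi D i = true) : Admissible 2 n (Phi D) := by
  refine ⟨hsq, ?_⟩
  intro i hi d hd0 hid hinter
  rcases Nat.lt_or_ge d 2 with h | h
  · have : d = 1 := by omega
    subst this; simp
  rcases Nat.even_or_odd (d-1) with hev | hod
  · exact hev.two_dvd
  · exfalso
    have hrun := run hadj i hi (d-1) (fun j hj0 hje => hinter j hj0 (by omega))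
    have hmem : i + ((d-1 : ℕ) : ZMod n) ∈ D := (hrun (d-1) (by omega) le_rfl).mpr hod
    have hnot : i + ((d:ℕ) : ZMod n) - 1 ∉ D := (Phi_true.mp hid).2
    apply hnot
    rw [show i + ((d:ℕ) : ZMod n) - 1 = i + ((d-1 : ℕ) : ZMod n) by
      rw [Nat.cast_sub (by omega : 1 ≤ d)]; push_cast; ring]
    exact hmem

lemma psi_adj {c : ZMod n → Bool} (hc : Admissible 2 n c) :
    ∀ p ∈ Psi c, p + 1 ∉ Psi c := by
  intro p hp hp1
  rw [mem_Psi] at hp hp1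
  have hstep : gap c (p + 1) = gap c p + 1 := by
    have := gap_step hc.1 (p + 1) (by rw [show p + 1 - 1 = p by ring]; exact hp.1)
    rwa [show p + 1 - 1 = p by ring] at this
  rw [hstep] at hp1
  rcases hp.2 with ⟨m, hm⟩
  rcases hp1.2 with ⟨m', hm'⟩
  omega

lemma phi_psi {c : ZMod n → Bool} (hc : Admissible 2 n c) : Phi (Psi c) = c := by
  funext p
  rcases Bool.eq_false_or_eq_true (c p) with hp | hp
  · -- c p = true
    rw [hp, Phi_true]
    constructor
    · rw [mem_Psi]
      rintro ⟨hf, -⟩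
      rw [hp] at hf
      simp at hf
    · rw [mem_Psi]
      rintro ⟨hq1, hq2⟩
      -- show Even (gap c (p-1)), contradicting hq2
      set e := gap c (p - 1) with he
      have he0 : 0 < e := gap_pos hc.1 (p - 1)
      have hi : c ((p - 1) - ((e : ℕ) : ZMod n)) = true := gap_black hc.1 (p - 1)
      have hdvd : 2 ∣ (e + 1) - 1 := by
        apply hc.2 _ hi (e + 1) (by omega)
        · rw [show (p - 1) - ((e : ℕ) : ZMod n) + ((e + 1 : ℕ) : ZMod n) = p by
            push_cast; ring]
          exact hp
        · intro j hj0 hjlt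
          have hje : j ≤ e := by omega
          rw [show (p - 1) - ((e : ℕ) : ZMod n) + ((j : ℕ) : ZMod n)
              = (p - 1) - (((e - j : ℕ)) : ZMod n) by
            rw [Nat.cast_sub hje]; push_cast; ring]
          rcases Nat.eq_or_lt_of_le hje with rfl | hlt
          · simpa using hq1
          · exact gap_min (p - 1) (by omega) (by omega)
      simp only [Nat.add_sub_cancel] at hdvd
      rw [Nat.odd_iff] at hq2
      omega
  · -- c p = false
    rw [hp, Phi_false]
    rcases Nat.even_or_odd (gap c p) with hev | hod
    · right
      have hg0 : 0 < gap c p := gap_pos hc.1 p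
      have hg2 : 2 ≤ gap c p := by
        rw [Nat.even_iff] at hev; omega
      have hp1 : c (p - 1) = false := by
        have := gap_min (c := c) p (j := 1) one_pos (by omega)
        simpa using this
      have hstep := gap_step hc.1 p hp1
      rw [mem_Psi]
      refine ⟨hp1, ?_⟩
      rw [Nat.odd_iff]
      rw [Nat.even_iff] at hev
      omega
    · left
      rw [mem_Psi]
      exact ⟨hp, hod⟩

lemma psi_phi {D : Finset (ZMod n)} (hadj : ∀ d ∈ D, d + 1 ∉ D)
    (hsq : ∃ i, Phi D i = true) : Psi (Phi D) = D := by
  ext p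
  set c := Phi D with hcdef
  rcases Bool.eq_false_or_eq_true (c p) with hp | hp
  · -- c p = true : both sides false
    have h1 : p ∉ Psi c := by
      rw [mem_Psi]
      rintro ⟨hf, -⟩
      rw [hp] at hf
      simp at hf
    have h2 : p ∉ D := (Phi_true.mp hp).1
    exact iff_of_false h1 h2
  · -- c p = false
    set e := gap c p with he
    have he0 : 0 < e := gap_pos hsq p
    have hi : c (p - ((e : ℕ) : ZMod n)) = true := gap_black hsq p
    have hrun := run hadj (p - ((e : ℕ) : ZMod n)) hi e ?whites
    case whites =>
      intro j hj0 hje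
      rw [show p - ((e : ℕ) : ZMod n) + ((j : ℕ) : ZMod n)
          = p - (((e - j : ℕ)) : ZMod n) by
        rw [Nat.cast_sub hje]; push_cast; ring]
      rcases Nat.eq_or_lt_of_le hje with rfl | hlt
      · simpa using hp
      · have hlt2 : e - j < gap c p := by rw [← he]; omega
        exact gap_min p (by omega) hlt2
    have hiff := hrun e he0 le_rfl
    rw [show p - ((e : ℕ) : ZMod n) + ((e : ℕ) : ZMod n) = p by ring] at hiff
    rw [mem_Psi]
    constructor
    · rintro ⟨-, hodd⟩
      exact hiff.mpr hodd
    · intro hpD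
      exact ⟨hp, hiff.mp hpD⟩

end Main

section Cover
variable {n : ℕ} [NeZero n]

lemma step2 {D : Finset (ZMod n)} (hadj : ∀ d ∈ D, d + 1 ∉ D)
    (hcov : ∀ i : ZMod n, i ∈ D ∨ i - 1 ∈ D) {a : ZMod n} (ha : a ∈ D) :
    ∀ k : ℕ, a + ((2 * k : ℕ) : ZMod n) ∈ D := by
  intro k
  induction k with
  | zero => simpa using ha
  | succ k ih =>
    have h1 : a + ((2 * k : ℕ) : ZMod n) + 1 ∉ D := hadj _ ih
    have h2 := hcov (a + ((2 * k : ℕ) : ZMod n) + 2)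
    rcases h2 with h2 | h2
    · rw [show a + ((2 * (k+1) : ℕ) : ZMod n) = a + ((2 * k : ℕ) : ZMod n) + 2 by
        push_cast; ring]
      exact h2
    · rw [show a + ((2 * k : ℕ) : ZMod n) + 2 - 1 = a + ((2 * k : ℕ) : ZMod n) + 1 by ring] at h2
      exact absurd h2 h1

lemma exists_mem_of_cover {D : Finset (ZMod n)}
    (hcov : ∀ i : ZMod n, i ∈ D ∨ i - 1 ∈ D) : ∃ a, a ∈ D := by
  rcases hcov 0 with h | h
  · exact ⟨0, h⟩
  · exact ⟨0 - 1, h⟩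

lemma not_sq_iff_cover {D : Finset (ZMod n)} :
    (¬ ∃ i, Phi D i = true) ↔ ∀ i : ZMod n, i ∈ D ∨ i - 1 ∈ D := by
  constructor
  · intro h i
    by_contra hc
    push_neg at hc
    exact h ⟨i, Phi_true.mpr ⟨hc.1, hc.2⟩⟩
  · rintro h ⟨i, hi⟩
    rcases Phi_true.mp hi with ⟨h1, h2⟩
    rcases h i with h3 | h3
    · exact h1 h3
    · exact h2 h3

lemma no_cover_of_odd (hodd : Odd n) {D : Finset (ZMod n)}
    (hadj : ∀ d ∈ D, d + 1 ∉ D) : ∃ i, Phi D i = true := by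
  by_contra hc
  rw [not_sq_iff_cover] at hc
  obtain ⟨a, ha⟩ := exists_mem_of_cover hc
  obtain ⟨m, hm⟩ := hodd
  have h1 : a + ((2 * (m + 1) : ℕ) : ZMod n) ∈ D := step2 hadj hc ha (m + 1)
  have h2 : ((2 * (m + 1) : ℕ) : ZMod n) = 1 := by
    rw [show 2 * (m + 1) = n + 1 by omega]
    push_cast
    rw [ZMod.natCast_self]
    ring
  rw [h2] at h1
  exact hadj a ha h1
end Cover

section CoverEven
variable {n : ℕ} [NeZero n] (hn2 : 2 ∣ n)

def parity (hn2 : 2 ∣ n) : ZMod n →+* ZMod 2 := ZMod.castHom hn2 (ZMod 2)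

lemma parity_zero_iff (hn2 : 2 ∣ n) (y : ZMod n) :
    parity hn2 y = 0 ↔ 2 ∣ y.val := by
  have h1 : parity hn2 y = ((y.val : ℕ) : ZMod 2) := by
    rw [← ZMod.natCast_rightInverse y]
    rw [map_natCast]
    rw [ZMod.natCast_rightInverse y]
  rw [h1]
  exact ZMod.natCast_eq_zero_iff _ _

lemma cover_classify (hn2 : 2 ∣ n) {D : Finset (ZMod n)}
    (hadj : ∀ d ∈ D, d + 1 ∉ D) (hcov : ∀ i : ZMod n, i ∈ D ∨ i - 1 ∈ D) :
    ∃ z : ZMod 2, D = Finset.univ.filter (fun x => parity hn2 x = z) := by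
  obtain ⟨a, ha⟩ := exists_mem_of_cover hcov
  refine ⟨parity hn2 a, ?_⟩
  ext x
  simp only [Finset.mem_filter, Finset.mem_univ, true_and]
  constructor
  · intro hx
    by_contra hne
    -- x - a has odd val
    have hodd : ¬ 2 ∣ (x - a).val := by
      intro h
      apply hne
      have h2 : parity hn2 (x - a) = 0 := (parity_zero_iff hn2 _).mpr h
      rw [map_sub] at h2
      exact sub_eq_zero.mp h2
    obtain ⟨k, hk⟩ := Nat.odd_iff.mpr (Nat.two_dvd_ne_zero.mp (by simpa using hodd))
    have hmem : a + ((2 * k : ℕ) : ZMod n) ∈ D := step2 hadj hcov ha k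
    have hx' : x = a + ((2 * k : ℕ) : ZMod n) + 1 := by
      have : x = a + ((x - a).val : ℕ) := by
        rw [ZMod.natCast_rightInverse (x - a)]; ring
      rw [this, hk]
      push_cast
      ring
    rw [hx'] at hx
    exact hadj _ hmem hx
  · intro hx
    have h0 : parity hn2 (x - a) = 0 := by
      rw [map_sub, hx, sub_self]
    obtain ⟨k, hk⟩ := (parity_zero_iff hn2 _).mp h0
    have : x = a + ((2 * k : ℕ) : ZMod n) := by
      have h1 : x = a + ((x - a).val : ℕ) := by
        rw [ZMod.natCast_rightInverse (x - a)]; ring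
      rw [h1, hk]
    rw [this]
    exact step2 hadj hcov ha k

end CoverEven

section CoverCount
variable {n : ℕ} [NeZero n]

lemma classD_valid (hn2 : 2 ∣ n) (z : ZMod 2) :
    (∀ d ∈ Finset.univ.filter (fun x : ZMod n => parity hn2 x = z), d + 1 ∉
        Finset.univ.filter (fun x : ZMod n => parity hn2 x = z)) ∧
    (∀ i : ZMod n, i ∈ Finset.univ.filter (fun x : ZMod n => parity hn2 x = z) ∨
        i - 1 ∈ Finset.univ.filter (fun x : ZMod n => parity hn2 x = z)) := by
  constructor
  · intro d hd hc
    simp only [Finset.mem_filter, Finset.mem_univ, true_and] at hd hc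
    rw [map_add, map_one, hd] at hc
    have hne : ∀ w : ZMod 2, w + 1 ≠ w := by decide
    exact hne z hc
  · intro i
    simp only [Finset.mem_filter, Finset.mem_univ, true_and]
    rw [map_sub, map_one]
    have hfact : ∀ w z : ZMod 2, w = z ∨ w - 1 = z := by decide
    exact hfact (parity hn2 i) z

lemma cover_filter_card (hn2 : 2 ∣ n) :
    (Finset.univ.filter (fun D : Finset (ZMod n) =>
      (∀ d ∈ D, d + 1 ∉ D) ∧ ∀ i : ZMod n, i ∈ D ∨ i - 1 ∈ D)).card = 2 := by
  classical
  have hset : (Finset.univ.filter (fun D : Finset (ZMod n) =>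
      (∀ d ∈ D, d + 1 ∉ D) ∧ ∀ i : ZMod n, i ∈ D ∨ i - 1 ∈ D)) =
      {Finset.univ.filter (fun x : ZMod n => parity hn2 x = 0),
       Finset.univ.filter (fun x : ZMod n => parity hn2 x = 1)} := by
    ext D
    simp only [Finset.mem_filter, Finset.mem_univ, true_and, Finset.mem_insert,
      Finset.mem_singleton]
    constructor
    · rintro ⟨hadj, hcov⟩
      obtain ⟨z, hz⟩ := cover_classify hn2 hadj hcov
      have : z = 0 ∨ z = 1 := by
        have hfact : ∀ w : ZMod 2, w = 0 ∨ w = 1 := by decide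
        exact hfact z
      rcases this with rfl | rfl
      · left; exact hz
      · right; exact hz
    · rintro (rfl | rfl)
      · exact classD_valid hn2 0
      · exact classD_valid hn2 1
  rw [hset]
  rw [Finset.card_pair]
  intro hc
  have h0 : (0 : ZMod n) ∈ Finset.univ.filter (fun x : ZMod n => parity hn2 x = 0) := by
    simp only [Finset.mem_filter, Finset.mem_univ, true_and, map_zero]
  rw [hc] at h0
  simp only [Finset.mem_filter, Finset.mem_univ, true_and, map_zero] at h0
  exact absurd h0.symm one_ne_zero

end CoverCount


lemma cycSets_one : (cycSets 1).card = 1 := by decide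

/-- The number of `2`-admissible colorings of a cycle of length `n` equals the
number of tilings of the cycle by curved squares and dominoes (a tiling being
recorded by its set `D` of domino-start positions, which must be pairwise
cyclically nonadjacent) when `n` is odd — in which case it also equals the
Lucas number `L n` — and equals that number minus `2` when `n` is even. -/
theorem stmt18 (L : ℕ → ℕ) (hL0 : L 0 = 2) (hL1 : L 1 = 1)
    (hLrec : ∀ n : ℕ, L (n + 2) = L (n + 1) + L n)
    (n : ℕ) (hn : 1 ≤ n) :
    (Odd n →
      Nat.card {c : ZMod n → Bool // Admissible 2 n c} =
        Nat.card {D : Set (ZMod n) // ∀ d ∈ D, d + 1 ∉ D} ∧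
      Nat.card {c : ZMod n → Bool // Admissible 2 n c} = L n) ∧
    (Even n →
      Nat.card {c : ZMod n → Bool // Admissible 2 n c} =
        Nat.card {D : Set (ZMod n) // ∀ d ∈ D, d + 1 ∉ D} - 2) := by
  haveI : NeZero n := ⟨by omega⟩
  have hB : Nat.card {D : Set (ZMod n) // ∀ d ∈ D, d + 1 ∉ D} = (cycSets n).card := by
    have e : {D : Finset (ZMod n) // ∀ d ∈ D, d + 1 ∉ D}
        ≃ {D : Set (ZMod n) // ∀ d ∈ D, d + 1 ∉ D} :=
      Equiv.subtypeEquiv Fintype.finsetEquivSet (by intro s; simp)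
    rw [← Nat.card_congr e, Nat.card_eq_fintype_card, Fintype.card_subtype]
    rfl
  have hA : Nat.card {c : ZMod n → Bool // Admissible 2 n c} =
      (Finset.univ.filter (fun D : Finset (ZMod n) =>
        (∀ d ∈ D, d + 1 ∉ D) ∧ ∃ i, Phi D i = true)).card := by
    have e : {D : Finset (ZMod n) // (∀ d ∈ D, d + 1 ∉ D) ∧ ∃ i, Phi D i = true}
        ≃ {c : ZMod n → Bool // Admissible 2 n c} :=
      { toFun := fun D => ⟨Phi D.1, phi_admissible D.2.1 D.2.2⟩
        invFun := fun c => ⟨Psi c.1, psi_adj c.2, by rw [phi_psi c.2]; exact c.2.1⟩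
        left_inv := fun D => Subtype.ext (psi_phi D.2.1 D.2.2)
        right_inv := fun c => Subtype.ext (phi_psi c.2) }
    rw [← Nat.card_congr e, Nat.card_eq_fintype_card, Fintype.card_subtype]
  have hsplit : (cycSets n).card =
      (Finset.univ.filter (fun D : Finset (ZMod n) =>
        (∀ d ∈ D, d + 1 ∉ D) ∧ ∃ i, Phi D i = true)).card +
      (Finset.univ.filter (fun D : Finset (ZMod n) =>
        (∀ d ∈ D, d + 1 ∉ D) ∧ ∀ i : ZMod n, i ∈ D ∨ i - 1 ∈ D)).card := by
    rw [← Finset.card_filter_add_card_filter_not (s := cycSets n)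
      (p := fun D => ∃ i, Phi D i = true)]
    congr 1
    · rw [cycSets, Finset.filter_filter]
    · rw [cycSets, Finset.filter_filter]
      congr 1
      apply Finset.filter_congr
      intro D _
      constructor
      · rintro ⟨h1, h2⟩; exact ⟨h1, not_sq_iff_cover.mp h2⟩
      · rintro ⟨h1, h2⟩; exact ⟨h1, not_sq_iff_cover.mpr h2⟩
  constructor
  · intro ho
    have hcov0 : (Finset.univ.filter (fun D : Finset (ZMod n) =>
        (∀ d ∈ D, d + 1 ∉ D) ∧ ∀ i : ZMod n, i ∈ D ∨ i - 1 ∈ D)).card = 0 := by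
      rw [Finset.card_eq_zero, Finset.filter_eq_empty_iff]
      rintro D -
      rintro ⟨hadj, hcov⟩
      exact (not_sq_iff_cover.mpr hcov) (no_cover_of_odd ho hadj)
    constructor
    · rw [hA, hB]; omega
    · rcases Nat.lt_or_ge n 3 with h3 | h3
      · have hn1 : n = 1 := by rcases ho with ⟨m, hm⟩; omega
        subst hn1
        have hone : (cycSets 1).card = 1 := cycSets_one
        rw [hA, hL1]
        omega
      · have hc := cycSets_card n h3
        have hl := lucas_pSets L hL0 hL1 hLrec (n - 3)
        have e1 : n - 3 + 3 = n := by omega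
        have e2 : n - 3 + 2 = n - 1 := by omega
        rw [e1, e2] at hl
        rw [hA]
        omega
  · intro he
    have hn2 : 2 ∣ n := he.two_dvd
    have hcov2 := cover_filter_card (n := n) hn2
    rw [hA, hB]
    omega
end
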